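/- arXiv:2602.05622 — 5 statements merged into one kernel-verified Lean document; each statement's English description precedes it below -/
import Mathlib

section
/- Let (Ω, P) be a probability space, let M : Ω → ℕ be a measurable random variable taking values in {1, 2, …}, and for each integer m ≥ 1 let D_m : Ω → ℝ be integrable. Set q_m := P(M ≥ m) and assume q_m > 0 for all m ≥ 1, that for each m the event {M ≥ m} is independent of D_m, and that ∑_{m=1}^∞ E[|D_m|] < ∞. Then the random variable ω ↦ ∑_{m=1}^{M(ω)} D_m(ω)/q_m is integrable and its expectation equals ∑_{m=1}^∞ E[D_m] (this series being absolutely convergent). -/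
open MeasureTheory ProbabilityTheory

/-- **Unbiasedness of the Russian-roulette truncated estimator.** Let `M : Ω → ℕ` be a
measurable random variable with values in `{1,2,…}` and, for each `m ≥ 1`, let `D m` be an
integrable real random variable. Set `q m := P(M ≥ m)` and assume `q m > 0`, that the event
`{M ≥ m}` is independent of `D m` (in the sense that the indicator of the event and `D m` are
independent random variables), and `∑_{m≥1} E[|D m|] < ∞`. Then
`ω ↦ ∑_{m=1}^{M ω} D m ω / q m` is integrable and its expectation equals `∑_{m≥1} E[D m]`,
this series being (absolutely) convergent. -/
theorem russian_roulette_unbiased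
    {Ω : Type*} [MeasurableSpace Ω] (P : Measure Ω) [IsProbabilityMeasure P]
    (M : Ω → ℕ) (hM : Measurable M) (hM1 : ∀ ω, 1 ≤ M ω)
    (D : ℕ → Ω → ℝ) (hD : ∀ m, 1 ≤ m → Integrable (D m) P)
    (q : ℕ → ℝ) (hq : ∀ m, q m = (P {ω | m ≤ M ω}).toReal)
    (hqpos : ∀ m, 1 ≤ m → 0 < q m)
    (hindep : ∀ m, 1 ≤ m →
      IndepFun (Set.indicator {ω | m ≤ M ω} (fun _ => (1 : ℝ))) (D m) P)
    (habs : Summable (fun m : ℕ => ∫ ω, |D (m + 1) ω| ∂P))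
    (S : Ω → ℝ) (hS : ∀ ω, S ω = ∑ m ∈ Finset.Icc 1 (M ω), D m ω / q m) :
    Integrable S P ∧
      HasSum (fun m : ℕ => ∫ ω, D (m + 1) ω ∂P) (∫ ω, S ω ∂P) := by
  set I : ℕ → Ω → ℝ := fun k => Set.indicator {ω | k ≤ M ω} (fun _ => (1 : ℝ)) with hI
  have hA : ∀ k : ℕ, MeasurableSet {ω | k ≤ M ω} := fun k => hM measurableSet_Ici
  have hIint : ∀ k, Integrable (I k) P := fun k =>
    (integrable_const (1 : ℝ)).indicator (hA k)
  have hInonneg : ∀ k ω, 0 ≤ I k ω := fun k ω =>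
    Set.indicator_nonneg (fun _ _ => zero_le_one) ω
  have hIbd : ∀ k ω, ‖I k ω‖ ≤ 1 := by
    intro k ω
    rw [Real.norm_eq_abs, abs_of_nonneg (hInonneg k ω)]
    exact Set.indicator_le_self' (fun _ _ => zero_le_one) ω
  have hII : ∀ k, ∫ ω, I k ω ∂P = q k := by
    intro k
    rw [hq, hI]
    simp [integral_indicator_const (1 : ℝ) (hA k)]
    rfl
  -- the summands
  set f : ℕ → Ω → ℝ := fun m ω => I (m + 1) ω * D (m + 1) ω / q (m + 1) with hf
  have hf_int : ∀ m, Integrable (f m) P := fun m =>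
    (((hD (m + 1) (Nat.le_add_left 1 m)).bdd_mul (hIint (m + 1)).aestronglyMeasurable
      (ae_of_all _ (hIbd (m + 1)))).div_const _)
  -- expectation of each summand
  have hmul : ∀ m : ℕ, ∫ ω, I (m + 1) ω * D (m + 1) ω ∂P
      = q (m + 1) * ∫ ω, D (m + 1) ω ∂P := by
    intro m
    have := (hindep (m + 1) (Nat.le_add_left 1 m)).integral_mul_eq_mul_integral
      (hIint (m + 1)).aestronglyMeasurable (hD (m + 1) (Nat.le_add_left 1 m)).aestronglyMeasurable
    rw [← hII (m + 1)]
    exact this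
  have hEf : ∀ m, ∫ ω, f m ω ∂P = ∫ ω, D (m + 1) ω ∂P := by
    intro m
    have hq0 : q (m + 1) ≠ 0 := (hqpos (m + 1) (Nat.le_add_left 1 m)).ne'
    simp only [hf, div_eq_mul_inv]
    rw [integral_mul_const, hmul m]
    field_simp
  -- abs version
  have hmulabs : ∀ m : ℕ, ∫ ω, I (m + 1) ω * |D (m + 1) ω| ∂P
      = q (m + 1) * ∫ ω, |D (m + 1) ω| ∂P := by
    intro m
    have hind : IndepFun (I (m + 1)) (fun ω => |D (m + 1) ω|) P :=
      (hindep (m + 1) (Nat.le_add_left 1 m)).comp measurable_id measurable_abs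
    have := hind.integral_mul_eq_mul_integral (hIint (m + 1)).aestronglyMeasurable
      (hD (m + 1) (Nat.le_add_left 1 m)).abs.aestronglyMeasurable
    rw [← hII (m + 1)]
    exact this
  have hnormf : ∀ m ω, ‖f m ω‖ = I (m + 1) ω * |D (m + 1) ω| / q (m + 1) := by
    intro m ω
    have hq0 : 0 < q (m + 1) := hqpos (m + 1) (Nat.le_add_left 1 m)
    rw [Real.norm_eq_abs, hf]
    rw [abs_div, abs_mul, abs_of_nonneg (hInonneg (m + 1) ω), abs_of_pos hq0]
  have hnorm_int : ∀ m, ∫ ω, ‖f m ω‖ ∂P = ∫ ω, |D (m + 1) ω| ∂P := by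
    intro m
    have hq0 : q (m + 1) ≠ 0 := (hqpos (m + 1) (Nat.le_add_left 1 m)).ne'
    simp only [hnormf, div_eq_mul_inv]
    rw [integral_mul_const, hmulabs m]
    field_simp
  have hnorm_sum : Summable fun m => ∫ ω, ‖f m ω‖ ∂P := by
    simpa only [hnorm_int] using habs
  -- pointwise: the series of f at ω equals S ω, and is a finite sum
  have hzero : ∀ ω, ∀ m ∉ Finset.range (M ω), f m ω = 0 := by
    intro ω m hm
    rw [Finset.mem_range, not_lt] at hm
    have : ω ∉ {ω' | m + 1 ≤ M ω'} := by
      simp only [Set.mem_setOf_eq, not_le]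
      omega
    simp [hf, hI, Set.indicator_of_notMem this, hm]
  have hSsum : ∀ ω, S ω = ∑ m ∈ Finset.range (M ω), f m ω := by
    intro ω
    rw [hS, ← Finset.Ico_add_one_right_eq_Icc, Finset.sum_Ico_eq_sum_range]
    simp only [Nat.add_sub_cancel]
    refine Finset.sum_congr rfl fun m hm => ?_
    rw [Finset.mem_range] at hm
    have hmem : ω ∈ {ω' | m + 1 ≤ M ω'} := hm
    rw [hf]
    simp only [hI, Set.indicator_of_mem hmem, one_mul, Nat.add_comm 1 m]
  have hStsum : ∀ ω, S ω = ∑' m, f m ω := by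
    intro ω
    rw [tsum_eq_sum (hzero ω), hSsum ω]
  -- integrability of S
  have hSmeas : AEStronglyMeasurable S P := by
    refine aestronglyMeasurable_of_tendsto_ae (u := Filter.atTop)
      (f := fun n ω => ∑ m ∈ Finset.range n, f m ω) (fun n =>
        (Finset.aestronglyMeasurable_fun_sum _ fun m _ => (hf_int m).aestronglyMeasurable)) ?_
    refine Filter.Eventually.of_forall fun ω => ?_
    refine tendsto_atTop_of_eventually_const (i₀ := M ω) fun n hn => ?_
    rw [hSsum ω]
    refine (Finset.sum_subset (Finset.range_subset_range.2 hn) fun m _ hm => hzero ω m hm).symm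
  have hSfin : HasFiniteIntegral S P := by
    show (∫⁻ ω, ‖S ω‖₊ ∂P) < ⊤
    calc ∫⁻ ω, ‖S ω‖₊ ∂P ≤ ∫⁻ ω, ∑' m, (‖f m ω‖₊ : ENNReal) ∂P := by
          refine lintegral_mono fun ω => ?_
          rw [hSsum ω]
          calc ((‖∑ m ∈ Finset.range (M ω), f m ω‖₊ : ENNReal))
              ≤ ∑ m ∈ Finset.range (M ω), (‖f m ω‖₊ : ENNReal) := by
                exact_mod_cast ENNReal.coe_mono (nnnorm_sum_le _ _)
            _ ≤ ∑' m, (‖f m ω‖₊ : ENNReal) := ENNReal.sum_le_tsum _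
      _ = ∑' m, ∫⁻ ω, ‖f m ω‖₊ ∂P :=
          lintegral_tsum fun m => (hf_int m).aestronglyMeasurable.enorm
      _ = ∑' m, ENNReal.ofReal (∫ ω, ‖f m ω‖ ∂P) := by
          refine tsum_congr fun m => ?_
          rw [ofReal_integral_norm_eq_lintegral_enorm (hf_int m)]
          rfl
      _ = ENNReal.ofReal (∑' m, ∫ ω, ‖f m ω‖ ∂P) :=
          (ENNReal.ofReal_tsum_of_nonneg (fun m => integral_nonneg fun ω => norm_nonneg _)
            hnorm_sum).symm
      _ < ⊤ := ENNReal.ofReal_lt_top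
  have hSint : Integrable S P := ⟨hSmeas, hSfin⟩
  refine ⟨hSint, ?_⟩
  have hkey := hasSum_integral_of_summable_integral_norm hf_int hnorm_sum
  have h1 : (∫ ω, (∑' m, f m ω) ∂P) = ∫ ω, S ω ∂P := by
    congr 1
    funext ω
    exact (hStsum ω).symm
  rw [h1] at hkey
  simpa only [hEf] using hkey
end

section
/- Let (Ω, P) be a probability space, let (X_k)_{k≥1} be a mutually independent family of square-integrable real random variables, and let M : Ω → ℕ take values in {1, 2, …} and be independent of the σ-algebra generated by the whole family (X_k)_{k≥1}. Set q_k := P(M ≥ k) and assume ∑_{k=1}^∞ q_k E[X_k²] < ∞ and ∑_{k=1}^∞ √(q_k) |E[X_k]| < ∞. Then the random variable S(ω) := ∑_{k=1}^{M(ω)} X_k(ω) is square-integrable and satisfies Var(S) ≤ ∑_{k=1}^∞ q_k E[X_k²] + (∑_{k=1}^∞ √(q_k) |E[X_k]|)². -/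
open MeasureTheory ProbabilityTheory

open scoped ENNReal

private lemma rr_half_half : (1 : ℝ≥0∞) / 1 = 1 / 2 + 1 / 2 := by
  rw [ENNReal.div_add_div_same]
  norm_num
  rw [ENNReal.div_self] <;> norm_num

private lemma rr_integrable_mul {Ω : Type*} [MeasurableSpace Ω] (P : Measure Ω)
    {f g : Ω → ℝ} (hf : MemLp f 2 P) (hg : MemLp g 2 P) :
    Integrable (fun ω => f ω * g ω) P := by
  have h : MemLp (f • g) 1 P := hg.smul hf
  exact memLp_one_iff_integrable.mp h

/-- **Second-moment control for the Russian-roulette truncated estimator.** Let `(X k)_{k≥1}`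
be a mutually independent family of square-integrable real random variables (here `X k : Ω → ℝ`
stands for the variable of index `k + 1`), and let `M : Ω → ℕ` take values in `{1,2,…}` and be
independent of the σ-algebra generated by the whole family. With `q k := P(M ≥ k + 1)` (the
survival probability of index `k + 1`), if `∑_k q_k E[X_k²] < ∞` and `∑_k √(q_k) |E[X_k]| < ∞`,
then `S ω := ∑_{k=1}^{M ω} X_k ω` is square-integrable and
`Var(S) = E[S²] - (E[S])² ≤ ∑_k q_k E[X_k²] + (∑_k √(q_k) |E[X_k]|)²`. -/
theorem russian_roulette_second_moment
    {Ω : Type*} [MeasurableSpace Ω] (P : Measure Ω) [IsProbabilityMeasure P]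
    (X : ℕ → Ω → ℝ) (hX2 : ∀ k, MemLp (X k) 2 P)
    (hXindep : iIndepFun X P)
    (M : Ω → ℕ) (hM : Measurable M) (hM1 : ∀ ω, 1 ≤ M ω)
    (hMindep :
      Indep (MeasurableSpace.comap M inferInstance)
        (⨆ k, MeasurableSpace.comap (X k) inferInstance) P)
    (q : ℕ → ℝ) (hq : ∀ k, q k = (P {ω | k + 1 ≤ M ω}).toReal)
    (hS2 : Summable fun k : ℕ => q k * ∫ ω, (X k ω) ^ 2 ∂P)
    (hS1 : Summable fun k : ℕ => Real.sqrt (q k) * |∫ ω, X k ω ∂P|)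
    (S : Ω → ℝ) (hS : ∀ ω, S ω = ∑ k ∈ Finset.range (M ω), X k ω) :
    MemLp S 2 P ∧
      (∫ ω, (S ω) ^ 2 ∂P) - (∫ ω, S ω ∂P) ^ 2 ≤
        (∑' k : ℕ, q k * ∫ ω, (X k ω) ^ 2 ∂P) +
          (∑' k : ℕ, Real.sqrt (q k) * |∫ ω, X k ω ∂P|) ^ 2 := by
  classical
  -- Notation
  set A : ℕ → Set Ω := fun k => M ⁻¹' Set.Ici (k + 1) with hAdef
  have hAmeas : ∀ k, MeasurableSet (A k) := fun k => hM measurableSet_Ici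
  have hqA : ∀ k, q k = (P (A k)).toReal := fun k => hq k
  have hq0 : ∀ k, 0 ≤ q k := fun k => (hqA k) ▸ ENNReal.toReal_nonneg
  have hv0 : ∀ k, 0 ≤ ∫ ω, (X k ω) ^ 2 ∂P := fun k => integral_nonneg fun ω => sq_nonneg _
  set b : ℕ → ℝ := fun k => Real.sqrt (q k) * |∫ ω, X k ω ∂P| with hbdef
  have hb0 : ∀ k, 0 ≤ b k := fun k => mul_nonneg (Real.sqrt_nonneg _) (abs_nonneg _)
  have hqanti : ∀ j k, j ≤ k → q k ≤ q j := by
    intro j k hjk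
    rw [hqA j, hqA k]
    refine ENNReal.toReal_mono (measure_ne_top P _) (measure_mono fun ω hω => ?_)
    simp only [hAdef, Set.mem_preimage, Set.mem_Ici] at hω ⊢
    omega
  set Y : ℕ → Ω → ℝ := fun k => (A k).indicator (X k) with hYdef
  set I1 : ℕ → Ω → ℝ := fun n => (A n).indicator (fun _ => (1 : ℝ)) with hIdef
  have hY2 : ∀ k, MemLp (Y k) 2 P := fun k => (hX2 k).indicator (hAmeas k)
  have hI_int : ∀ n, Integrable (I1 n) P := fun n =>
    (integrable_const (1 : ℝ)).indicator (hAmeas n)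
  have hI_integral : ∀ n, ∫ ω, I1 n ω ∂P = q n := by
    intro n
    rw [hqA n]
    have := integral_indicator_const (1 : ℝ) (hAmeas n) (μ := P)
    simpa [smul_eq_mul, Measure.real] using this
  -- Independence of the indicator and products of the X's
  have hIndep : ∀ n j k, IndepFun (I1 n) (fun ω => X j ω * X k ω) P := by
    intro n j k
    have hI : Measurable[MeasurableSpace.comap M inferInstance] (I1 n) := by
      have hMm : Measurable[MeasurableSpace.comap M inferInstance] M :=
        Measurable.of_comap_le le_rfl
      have hfun : I1 n = (fun t : ℕ => (Set.Ici (n + 1)).indicator (fun _ => (1 : ℝ)) t) ∘ M := by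
        funext ω
        by_cases h : n + 1 ≤ M ω <;> simp [hIdef, hAdef, Set.indicator_apply, h] <;> omega
      rw [hfun]
      exact Measurable.of_discrete.comp hMm
    have hG : Measurable[⨆ i, MeasurableSpace.comap (X i) inferInstance]
        (fun ω => X j ω * X k ω) := by
      have hj : Measurable[⨆ i, MeasurableSpace.comap (X i) inferInstance] (X j) :=
        Measurable.of_comap_le (le_iSup (fun i => MeasurableSpace.comap (X i) inferInstance) j)
      have hk : Measurable[⨆ i, MeasurableSpace.comap (X i) inferInstance] (X k) :=
        Measurable.of_comap_le (le_iSup (fun i => MeasurableSpace.comap (X i) inferInstance) k)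
      exact hj.mul hk
    exact indep_of_indep_of_le_left (indep_of_indep_of_le_right hMindep hG.comap_le) hI.comap_le
  have hXX_int : ∀ j k, Integrable (fun ω => X j ω * X k ω) P := fun j k =>
    rr_integrable_mul P (hX2 j) (hX2 k)
  have hYY_int : ∀ j k, Integrable (fun ω => Y j ω * Y k ω) P := fun j k =>
    rr_integrable_mul P (hY2 j) (hY2 k)
  -- value of each cross term
  have hterm : ∀ j k, (∫ ω, Y j ω * Y k ω ∂P) = q (max j k) * ∫ ω, X j ω * X k ω ∂P := by
    intro j k
    have hpt : (fun ω => Y j ω * Y k ω) = fun ω => I1 (max j k) ω * (X j ω * X k ω) := by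
      funext ω
      simp only [hYdef, hIdef, Set.indicator_apply, hAdef, Set.mem_preimage, Set.mem_Ici]
      have hmax : (max j k + 1 ≤ M ω) ↔ (j + 1 ≤ M ω ∧ k + 1 ≤ M ω) := by omega
      by_cases hj : j + 1 ≤ M ω <;> by_cases hk : k + 1 ≤ M ω <;>
        simp [hj, hk, hmax]
    calc ∫ ω, Y j ω * Y k ω ∂P = ∫ ω, I1 (max j k) ω * (X j ω * X k ω) ∂P := by rw [hpt]
      _ = (∫ ω, I1 (max j k) ω ∂P) * ∫ ω, X j ω * X k ω ∂P := by
          simpa using (hIndep (max j k) j k).integral_mul_eq_mul_integral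
            (hI_int _).aestronglyMeasurable (hXX_int j k).aestronglyMeasurable
      _ = q (max j k) * ∫ ω, X j ω * X k ω ∂P := by rw [hI_integral]
  have hoff : ∀ j k, j ≠ k →
      (∫ ω, X j ω * X k ω ∂P) = (∫ ω, X j ω ∂P) * ∫ ω, X k ω ∂P := by
    intro j k hjk
    simpa using (hXindep.indepFun hjk).integral_mul_eq_mul_integral
      ((hX2 j).integrable one_le_two).aestronglyMeasurable ((hX2 k).integrable one_le_two).aestronglyMeasurable
  have hdiag : ∀ k, (∫ ω, X k ω * X k ω ∂P) = ∫ ω, (X k ω) ^ 2 ∂P := by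
    intro k
    congr 1
    funext ω
    ring
  -- per-term bound
  have htermle : ∀ j k, (∫ ω, Y j ω * Y k ω ∂P) ≤
      (if j = k then q k * ∫ ω, (X k ω) ^ 2 ∂P else 0) + b j * b k := by
    intro j k
    rcases eq_or_ne j k with rfl | hjk
    · rw [hterm, hdiag, max_self, if_pos rfl]
      have := mul_nonneg (hb0 j) (hb0 j)
      linarith
    · rw [hterm, hoff j k hjk, if_neg hjk, zero_add]
      have hqm : q (max j k) ≤ Real.sqrt (q j) * Real.sqrt (q k) := by
        have h1 : q (max j k) ≤ q j := hqanti _ _ (le_max_left _ _)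
        have h2 : q (max j k) ≤ q k := hqanti _ _ (le_max_right _ _)
        calc q (max j k) = Real.sqrt (q (max j k)) * Real.sqrt (q (max j k)) :=
              (Real.mul_self_sqrt (hq0 _)).symm
          _ ≤ Real.sqrt (q j) * Real.sqrt (q k) :=
              mul_le_mul (Real.sqrt_le_sqrt h1) (Real.sqrt_le_sqrt h2)
                (Real.sqrt_nonneg _) (Real.sqrt_nonneg _)
      calc q (max j k) * ((∫ ω, X j ω ∂P) * ∫ ω, X k ω ∂P)
          ≤ q (max j k) * |(∫ ω, X j ω ∂P) * ∫ ω, X k ω ∂P| :=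
            mul_le_mul_of_nonneg_left (le_abs_self _) (hq0 _)
        _ = q (max j k) * (|∫ ω, X j ω ∂P| * |∫ ω, X k ω ∂P|) := by rw [abs_mul]
        _ ≤ (Real.sqrt (q j) * Real.sqrt (q k)) * (|∫ ω, X j ω ∂P| * |∫ ω, X k ω ∂P|) :=
            mul_le_mul_of_nonneg_right hqm
              (mul_nonneg (abs_nonneg _) (abs_nonneg _))
        _ = b j * b k := by rw [hbdef]; ring
  -- truncated sums
  set SN : ℕ → Ω → ℝ := fun N ω => ∑ k ∈ Finset.range N, Y k ω with hSNdef
  have hSNmem : ∀ N, MemLp (SN N) 2 P := fun N =>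
    memLp_finset_sum (Finset.range N) (fun k _ => hY2 k)
  have hSNsq : ∀ N, (∫ ω, (SN N ω) ^ 2 ∂P) =
      ∑ j ∈ Finset.range N, ∑ k ∈ Finset.range N, ∫ ω, Y j ω * Y k ω ∂P := by
    intro N
    have h1 : ∀ ω, (SN N ω) ^ 2 =
        ∑ j ∈ Finset.range N, ∑ k ∈ Finset.range N, Y j ω * Y k ω := by
      intro ω
      rw [hSNdef, pow_two, Finset.sum_mul_sum]
    simp_rw [h1]
    rw [integral_finset_sum _ fun j _ => integrable_finset_sum _ fun k _ => hYY_int j k]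
    exact Finset.sum_congr rfl fun j _ => integral_finset_sum _ fun k _ => hYY_int j k
  -- uniform bound on the second moments of the truncations
  have hqv_nonneg : ∀ k, 0 ≤ q k * ∫ ω, (X k ω) ^ 2 ∂P := fun k =>
    mul_nonneg (hq0 k) (hv0 k)
  have hC0 : 0 ≤ (∑' k : ℕ, q k * ∫ ω, (X k ω) ^ 2 ∂P) + (∑' k : ℕ, b k) ^ 2 :=
    add_nonneg (tsum_nonneg hqv_nonneg) (sq_nonneg _)
  have hSNle : ∀ N, (∫ ω, (SN N ω) ^ 2 ∂P) ≤
      (∑' k : ℕ, q k * ∫ ω, (X k ω) ^ 2 ∂P) + (∑' k : ℕ, b k) ^ 2 := by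
    intro N
    rw [hSNsq]
    have step1 : (∑ j ∈ Finset.range N, ∑ k ∈ Finset.range N, ∫ ω, Y j ω * Y k ω ∂P)
        ≤ ∑ j ∈ Finset.range N, ∑ k ∈ Finset.range N,
            ((if j = k then q k * ∫ ω, (X k ω) ^ 2 ∂P else 0) + b j * b k) :=
      Finset.sum_le_sum fun j _ => Finset.sum_le_sum fun k _ => htermle j k
    have e1 : (∑ j ∈ Finset.range N, ∑ k ∈ Finset.range N,
          (if j = k then q k * ∫ ω, (X k ω) ^ 2 ∂P else 0))
        = ∑ k ∈ Finset.range N, q k * ∫ ω, (X k ω) ^ 2 ∂P := by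
      rw [Finset.sum_congr rfl fun j _ =>
        Finset.sum_ite_eq (Finset.range N) j (fun k => q k * ∫ ω, (X k ω) ^ 2 ∂P)]
      exact Finset.sum_congr rfl fun j hj => if_pos hj
    have e2 : (∑ j ∈ Finset.range N, ∑ k ∈ Finset.range N, b j * b k)
        = (∑ k ∈ Finset.range N, b k) ^ 2 := by
      rw [← Finset.sum_mul_sum, ← pow_two]
    have step2 : (∑ j ∈ Finset.range N, ∑ k ∈ Finset.range N,
          ((if j = k then q k * ∫ ω, (X k ω) ^ 2 ∂P else 0) + b j * b k))
        = (∑ k ∈ Finset.range N, q k * ∫ ω, (X k ω) ^ 2 ∂P)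
            + (∑ k ∈ Finset.range N, b k) ^ 2 := by
      simp_rw [Finset.sum_add_distrib]
      rw [e1, e2]
    have step3 : (∑ k ∈ Finset.range N, q k * ∫ ω, (X k ω) ^ 2 ∂P)
        ≤ ∑' k : ℕ, q k * ∫ ω, (X k ω) ^ 2 ∂P :=
      Summable.sum_le_tsum _ (fun k _ => hqv_nonneg k) hS2
    have step4 : (∑ k ∈ Finset.range N, b k) ^ 2 ≤ (∑' k : ℕ, b k) ^ 2 := by
      refine pow_le_pow_left₀ (Finset.sum_nonneg fun k _ => hb0 k) ?_ 2
      exact Summable.sum_le_tsum _ (fun k _ => hb0 k) hS1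
    linarith
  -- pointwise convergence of the truncations to S
  have hSN_eq : ∀ ω N, M ω ≤ N → SN N ω = S ω := by
    intro ω N hN
    have h2 : (∑ k ∈ Finset.range N, Y k ω) = ∑ k ∈ Finset.range (M ω), Y k ω := by
      refine (Finset.sum_subset (Finset.range_subset_range.mpr hN) fun k _ hk => ?_).symm
      rw [Finset.mem_range, not_lt] at hk
      refine Set.indicator_of_notMem ?_ _
      simp only [hAdef, Set.mem_preimage, Set.mem_Ici]
      omega
    have h1 : (∑ k ∈ Finset.range (M ω), Y k ω) = ∑ k ∈ Finset.range (M ω), X k ω := by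
      refine Finset.sum_congr rfl fun k hk => ?_
      rw [Finset.mem_range] at hk
      refine Set.indicator_of_mem ?_ _
      simp only [hAdef, Set.mem_preimage, Set.mem_Ici]
      omega
    rw [hS ω]
    calc SN N ω = ∑ k ∈ Finset.range N, Y k ω := rfl
      _ = ∑ k ∈ Finset.range (M ω), Y k ω := h2
      _ = ∑ k ∈ Finset.range (M ω), X k ω := h1
  have htend : ∀ ω, Filter.Tendsto (fun N => SN N ω) Filter.atTop (nhds (S ω)) := fun ω =>
    tendsto_atTop_of_eventually_const (i₀ := M ω) fun N hN => hSN_eq ω N hN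
  have hSmeas : AEStronglyMeasurable S P :=
    aestronglyMeasurable_of_tendsto_ae Filter.atTop
      (fun N => (hSNmem N).aestronglyMeasurable) (ae_of_all _ htend)
  -- Fatou
  have hSNof : ∀ N, (∫⁻ ω, ENNReal.ofReal ((SN N ω) ^ 2) ∂P)
      = ENNReal.ofReal (∫ ω, (SN N ω) ^ 2 ∂P) := fun N =>
    (ofReal_integral_eq_lintegral_ofReal (hSNmem N).integrable_sq
      (ae_of_all _ fun ω => sq_nonneg _)).symm
  have hfatou : (∫⁻ ω, ENNReal.ofReal ((S ω) ^ 2) ∂P)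
      ≤ ENNReal.ofReal ((∑' k : ℕ, q k * ∫ ω, (X k ω) ^ 2 ∂P) + (∑' k : ℕ, b k) ^ 2) := by
    have hpt : ∀ ω, ENNReal.ofReal ((S ω) ^ 2)
        = Filter.liminf (fun N => ENNReal.ofReal ((SN N ω) ^ 2)) Filter.atTop := by
      intro ω
      refine (Filter.Tendsto.liminf_eq ?_).symm
      exact tendsto_atTop_of_eventually_const (i₀ := M ω)
        fun N hN => by rw [hSN_eq ω N hN]
    have hub : ∀ N, (∫⁻ ω, ENNReal.ofReal ((SN N ω) ^ 2) ∂P)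
        ≤ ENNReal.ofReal ((∑' k : ℕ, q k * ∫ ω, (X k ω) ^ 2 ∂P) + (∑' k : ℕ, b k) ^ 2) :=
      fun N => (hSNof N).le.trans (ENNReal.ofReal_le_ofReal (hSNle N))
    calc (∫⁻ ω, ENNReal.ofReal ((S ω) ^ 2) ∂P)
        = ∫⁻ ω, Filter.liminf (fun N => ENNReal.ofReal ((SN N ω) ^ 2)) Filter.atTop ∂P :=
          lintegral_congr hpt
      _ ≤ Filter.liminf (fun N => ∫⁻ ω, ENNReal.ofReal ((SN N ω) ^ 2) ∂P) Filter.atTop :=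
          lintegral_liminf_le' fun N =>
            (ENNReal.measurable_ofReal.comp_aemeasurable
              ((hSNmem N).aestronglyMeasurable.aemeasurable.pow_const 2))
      _ ≤ ENNReal.ofReal ((∑' k : ℕ, q k * ∫ ω, (X k ω) ^ 2 ∂P) + (∑' k : ℕ, b k) ^ 2) := by
          refine le_trans (Filter.liminf_le_liminf (Filter.Eventually.of_forall hub)) ?_
          simp [Filter.liminf_const]
  -- square integrability of S
  have hS2int : Integrable (fun ω => (S ω) ^ 2) P := by
    have hmeas2 : AEStronglyMeasurable (fun ω => (S ω) ^ 2) P := by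
      exact (hSmeas.mul hSmeas).congr (ae_of_all _ fun ω => (pow_two (S ω)).symm)
    refine ⟨hmeas2, ?_⟩
    rw [hasFiniteIntegral_iff_ofReal (ae_of_all _ fun ω => sq_nonneg _)]
    exact lt_of_le_of_lt hfatou ENNReal.ofReal_lt_top
  have hSmem : MemLp S 2 P := (memLp_two_iff_integrable_sq hSmeas).mpr hS2int
  -- conclusion
  have hfinal : (∫ ω, (S ω) ^ 2 ∂P)
      ≤ (∑' k : ℕ, q k * ∫ ω, (X k ω) ^ 2 ∂P) + (∑' k : ℕ, b k) ^ 2 := by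
    have h1 : ENNReal.ofReal (∫ ω, (S ω) ^ 2 ∂P) = ∫⁻ ω, ENNReal.ofReal ((S ω) ^ 2) ∂P :=
      ofReal_integral_eq_lintegral_ofReal hS2int (ae_of_all _ fun ω => sq_nonneg _)
    exact (ENNReal.ofReal_le_ofReal_iff hC0).mp (h1 ▸ hfatou)
  refine ⟨hSmem, ?_⟩
  have hsq := sq_nonneg (∫ ω, S ω ∂P)
  have : (∑' k : ℕ, Real.sqrt (q k) * |∫ ω, X k ω ∂P|) = ∑' k : ℕ, b k := rfl
  rw [this]
  linarith
end

section
/- Let (Ω, P) be a probability space, τ > 0, and p ∈ (0,1). For each integer k ≥ 1 let A_k, B_k : Ω → {0,1} be random variables with A_k B_k = 0, E[A_k] = p^{2k−1}, and E[B_k] = (1−p)^{2k−1}. Let M : Ω → ℕ take values in {1, 2, …}, set q_k := P(M ≥ k), assume q_k > 0 for all k, and assume that for each k the event {M ≥ k} is independent of the pair (A_k, B_k). Let (c_{2k−1})_{k≥1} be real coefficients and let α := max{p, 1−p}; assume ∑_{k=1}^∞ |c_{2k−1}| α^{2k−1} < ∞. Then the random variable Δ̂ := τ ∑_{k=1}^{M}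 (c_{2k−1}/q_k)(A_k − B_k) is integrable and E[Δ̂] = τ ∑_{k=1}^∞ c_{2k−1} (p^{2k−1} − (1−p)^{2k−1}). -/
open MeasureTheory ProbabilityTheory
open scoped ENNReal NNReal

/-- **Unbiasedness of the general-link Russian-roulette gap estimator.** Let `τ > 0`,
`p ∈ (0,1)`, and for each `k ≥ 1` let `A k, B k : Ω → {0,1}` be random variables with
`A k * B k = 0`, `E[A k] = p^(2k-1)` and `E[B k] = (1-p)^(2k-1)`. Let `M : Ω → ℕ` take values
in `{1,2,…}`, set `q k := P(M ≥ k) > 0`, and assume the event `{M ≥ k}` is independent of the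
pair `(A k, B k)`. Let `(c k)` be coefficients (with `c k` playing the role of `c_{2k-1}`),
`α := max p (1-p)`, and assume `∑_{k≥1} |c k| α^(2k-1) < ∞`. Then
`Δ̂ := τ ∑_{k=1}^{M} (c k / q k) (A k - B k)` is integrable and
`E[Δ̂] = τ ∑_{k≥1} c k (p^(2k-1) - (1-p)^(2k-1))`. -/
theorem general_link_russian_roulette_unbiased
    {Ω : Type*} [MeasurableSpace Ω] (P : Measure Ω) [IsProbabilityMeasure P]
    (τ p : ℝ) (hτ : 0 < τ) (hp0 : 0 < p) (hp1 : p < 1)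
    (A B : ℕ → Ω → ℝ)
    (hABmeas : ∀ k, 1 ≤ k → Measurable (A k) ∧ Measurable (B k))
    (hA01 : ∀ k, 1 ≤ k → ∀ ω, A k ω = 0 ∨ A k ω = 1)
    (hB01 : ∀ k, 1 ≤ k → ∀ ω, B k ω = 0 ∨ B k ω = 1)
    (hAB0 : ∀ k, 1 ≤ k → ∀ ω, A k ω * B k ω = 0)
    (hAmean : ∀ k, 1 ≤ k → (∫ ω, A k ω ∂P) = p ^ (2 * k - 1))
    (hBmean : ∀ k, 1 ≤ k → (∫ ω, B k ω ∂P) = (1 - p) ^ (2 * k - 1))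
    (M : Ω → ℕ) (hM : Measurable M) (hM1 : ∀ ω, 1 ≤ M ω)
    (q : ℕ → ℝ) (hq : ∀ k, q k = (P {ω | k ≤ M ω}).toReal)
    (hqpos : ∀ k, 1 ≤ k → 0 < q k)
    (hindep : ∀ k, 1 ≤ k →
      IndepFun (Set.indicator {ω | k ≤ M ω} (fun _ => (1 : ℝ)))
        (fun ω => (A k ω, B k ω)) P)
    (c : ℕ → ℝ) (α : ℝ) (hα : α = max p (1 - p))
    (habs : Summable fun k : ℕ => |c (k + 1)| * α ^ (2 * k + 1))
    (Δhat : Ω → ℝ)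
    (hΔhat : ∀ ω, Δhat ω = τ * ∑ k ∈ Finset.Icc 1 (M ω), (c k / q k) * (A k ω - B k ω)) :
    Integrable Δhat P ∧
      (∫ ω, Δhat ω ∂P) =
        τ * ∑' k : ℕ, c (k + 1) * (p ^ (2 * k + 1) - (1 - p) ^ (2 * k + 1)) := by
  classical
  have hSmeas : ∀ k : ℕ, MeasurableSet {ω | k ≤ M ω} := fun k => hM measurableSet_Ici
  set F : ℕ → Ω → ℝ := fun j ω =>
    Set.indicator {ω' | j + 1 ≤ M ω'} (fun _ => (1 : ℝ)) ω *
      ((c (j + 1) / q (j + 1)) * (A (j + 1) ω - B (j + 1) ω)) with hFdef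
  -- per-index facts
  have key : ∀ j : ℕ,
      Integrable (F j) P ∧
      (∫ ω, F j ω ∂P) = c (j + 1) * (p ^ (2 * j + 1) - (1 - p) ^ (2 * j + 1)) ∧
      (∫ ω, ‖F j ω‖ ∂P) = |c (j + 1)| * (p ^ (2 * j + 1) + (1 - p) ^ (2 * j + 1)) := by
    intro j
    set k := j + 1 with hk'
    have hk : 1 ≤ k := Nat.le_add_left 1 j
    have he : 2 * k - 1 = 2 * j + 1 := by omega
    have hAmeas := (hABmeas k hk).1
    have hBmeas := (hABmeas k hk).2
    have hqk := hqpos k hk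
    have hqne : q k ≠ 0 := ne_of_gt hqk
    have hAint : Integrable (A k) P := by
      refine (integrable_const (1 : ℝ)).mono' hAmeas.aestronglyMeasurable (ae_of_all _ ?_)
      intro ω; rcases hA01 k hk ω with h | h <;> simp [h]
    have hBint : Integrable (B k) P := by
      refine (integrable_const (1 : ℝ)).mono' hBmeas.aestronglyMeasurable (ae_of_all _ ?_)
      intro ω; rcases hB01 k hk ω with h | h <;> simp [h]
    set I : Ω → ℝ := Set.indicator {ω' | k ≤ M ω'} (fun _ => (1 : ℝ)) with hIdef
    have hImeas : Measurable I := measurable_const.indicator (hSmeas k)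
    have hIint : Integrable I P := (integrable_const (1 : ℝ)).indicator (hSmeas k)
    have hIinteg : (∫ ω, I ω ∂P) = q k := by
      rw [hIdef, hq]
      simpa [measureReal_def] using integral_indicator_const (1 : ℝ) (hSmeas k)
    have hI01 : ∀ ω, I ω = 0 ∨ I ω = 1 := by
      intro ω; by_cases h : ω ∈ {ω' | k ≤ M ω'} <;> simp [hIdef, Set.indicator_apply, h]
    have hYint : Integrable (fun ω => A k ω - B k ω) P := hAint.sub hBint
    have hZint : Integrable (fun ω => A k ω + B k ω) P := hAint.add hBint
    have hindY : IndepFun I (fun ω => A k ω - B k ω) P :=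
      (hindep k hk).comp measurable_id (measurable_fst.sub measurable_snd)
    have hindZ : IndepFun I (fun ω => A k ω + B k ω) P :=
      (hindep k hk).comp measurable_id (measurable_fst.add measurable_snd)
    have hmulY : (∫ ω, I ω * (A k ω - B k ω) ∂P)
        = (∫ ω, I ω ∂P) * ∫ ω, (A k ω - B k ω) ∂P :=
      hindY.integral_fun_mul_eq_mul_integral hIint.aestronglyMeasurable hYint.aestronglyMeasurable
    have hmulZ : (∫ ω, I ω * (A k ω + B k ω) ∂P)
        = (∫ ω, I ω ∂P) * ∫ ω, (A k ω + B k ω) ∂P :=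
      hindZ.integral_fun_mul_eq_mul_integral hIint.aestronglyMeasurable hZint.aestronglyMeasurable
    have hYmean : (∫ ω, (A k ω - B k ω) ∂P) = p ^ (2 * j + 1) - (1 - p) ^ (2 * j + 1) := by
      rw [integral_sub hAint hBint, hAmean k hk, hBmean k hk, he]
    have hZmean : (∫ ω, (A k ω + B k ω) ∂P) = p ^ (2 * j + 1) + (1 - p) ^ (2 * j + 1) := by
      rw [integral_add hAint hBint, hAmean k hk, hBmean k hk, he]
    have hFj : F j = fun ω => (c k / q k) * (I ω * (A k ω - B k ω)) := by
      funext ω; simp only [hFdef, hIdef]; ring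
    have hnormpt : ∀ ω, ‖F j ω‖ = (|c k| / q k) * (I ω * (A k ω + B k ω)) := by
      intro ω
      have habsY : |A k ω - B k ω| = A k ω + B k ω := by
        rcases hA01 k hk ω with hA | hA <;> rcases hB01 k hk ω with hB | hB
        · rw [hA, hB]; norm_num
        · rw [hA, hB]; norm_num
        · rw [hA, hB]; norm_num
        · exfalso; have := hAB0 k hk ω; rw [hA, hB] at this; norm_num at this
      have hIabs : |I ω| = I ω := by rcases hI01 ω with h | h <;> simp [h]
      rw [hFj]
      simp only [Real.norm_eq_abs, abs_mul, abs_div, abs_of_pos hqk, hIabs, habsY]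
      try ring
    have hFjmeas : Measurable (F j) := by
      rw [hFj]
      exact measurable_const.mul (hImeas.mul (hAmeas.sub hBmeas))
    have hFint : Integrable (F j) P := by
      refine (integrable_const (|c k| / q k * 2)).mono'
        hFjmeas.aestronglyMeasurable (ae_of_all _ fun ω => ?_)
      rw [hnormpt ω]
      have hd : (0 : ℝ) ≤ |c k| / q k := div_nonneg (abs_nonneg _) hqk.le
      have h2 : I ω * (A k ω + B k ω) ≤ 2 := by
        rcases hI01 ω with h | h <;> rcases hA01 k hk ω with hA | hA <;>
          rcases hB01 k hk ω with hB | hB <;> rw [h, hA, hB] <;> norm_num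
      exact mul_le_mul_of_nonneg_left h2 hd
    constructor
    · exact hFint
    constructor
    · rw [hFj, integral_const_mul, hmulY, hIinteg, hYmean]
      field_simp
    · have : (∫ ω, ‖F j ω‖ ∂P) = ∫ ω, (|c k| / q k) * (I ω * (A k ω + B k ω)) ∂P := by
        exact integral_congr_ae (ae_of_all _ hnormpt)
      rw [this, integral_const_mul, hmulZ, hIinteg, hZmean]
      field_simp
  have hFint : ∀ j, Integrable (F j) P := fun j => (key j).1
  have hFval : ∀ j, (∫ ω, F j ω ∂P) = c (j + 1) * (p ^ (2 * j + 1) - (1 - p) ^ (2 * j + 1)) :=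
    fun j => (key j).2.1
  have hFnorm : ∀ j, (∫ ω, ‖F j ω‖ ∂P)
      = |c (j + 1)| * (p ^ (2 * j + 1) + (1 - p) ^ (2 * j + 1)) := fun j => (key j).2.2
  -- summability of integrals of norms
  have hpα : p ≤ α := by rw [hα]; exact le_max_left _ _
  have h1pα : 1 - p ≤ α := by rw [hα]; exact le_max_right _ _
  have hαpos : 0 < α := lt_of_lt_of_le hp0 hpα
  have hbound : ∀ j, (∫ ω, ‖F j ω‖ ∂P) ≤ 2 * (|c (j + 1)| * α ^ (2 * j + 1)) := by
    intro j
    rw [hFnorm j]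
    have h1 : p ^ (2 * j + 1) ≤ α ^ (2 * j + 1) := pow_le_pow_left₀ hp0.le hpα _
    have h2 : (1 - p) ^ (2 * j + 1) ≤ α ^ (2 * j + 1) :=
      pow_le_pow_left₀ (by linarith) h1pα _
    nlinarith [abs_nonneg (c (j + 1))]
  have hsumnorm : Summable fun j => ∫ ω, ‖F j ω‖ ∂P :=
    Summable.of_nonneg_of_le (fun j => integral_nonneg fun ω => norm_nonneg _)
      hbound (habs.mul_left 2)
  -- pointwise: F has finite support
  have hzero : ∀ j ω, M ω ≤ j → F j ω = 0 := by
    intro j ω h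
    have : ω ∉ {ω' | j + 1 ≤ M ω'} := by simp only [Set.mem_setOf_eq]; omega
    simp only [hFdef, Set.indicator_of_notMem this, zero_mul]
  have hsuppt : ∀ ω, Summable fun j => F j ω := fun ω =>
    summable_of_ne_finset_zero (s := Finset.range (M ω))
      (fun j hj => hzero j ω (by simpa using Finset.mem_range.not.mp hj))
  -- identification of Δhat with τ * tsum
  set G : Ω → ℝ := fun ω => ∑' j, F j ω with hGdef
  have hpt : ∀ ω, G ω = ∑ k ∈ Finset.Icc 1 (M ω), (c k / q k) * (A k ω - B k ω) := by
    intro ω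
    have h1 : G ω = ∑ j ∈ Finset.range (M ω), F j ω :=
      tsum_eq_sum (fun j hj => hzero j ω (by simpa using Finset.mem_range.not.mp hj))
    rw [h1, ← Finset.Ico_add_one_right_eq_Icc, Finset.sum_Ico_eq_sum_range]
    try simp only [Nat.add_sub_cancel]
    refine Finset.sum_congr rfl fun i hi => ?_
    have him : ω ∈ {ω' | i + 1 ≤ M ω'} := Finset.mem_range.mp hi
    rw [add_comm 1 i]
    simp only [hFdef, Set.indicator_of_mem him, one_mul]
  -- integrability of G
  have hFmeas : ∀ j, Measurable (F j) := by
    intro j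
    exact (measurable_const.indicator (hSmeas (j + 1))).mul
      (measurable_const.mul (((hABmeas (j + 1) (Nat.le_add_left 1 j)).1).sub
        ((hABmeas (j + 1) (Nat.le_add_left 1 j)).2)))
  have hGmeas : Measurable G := by
    refine measurable_of_tendsto_metrizable
      (f := fun n ω => ∑ j ∈ Finset.range n, F j ω)
      (fun n => Finset.measurable_sum _ fun j _ => hFmeas j) ?_
    rw [tendsto_pi_nhds]
    intro ω
    exact ((hsuppt ω).hasSum).tendsto_sum_nat
  have hGint : Integrable G P := by
    refine ⟨hGmeas.aestronglyMeasurable, ?_⟩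
    have hkey : ∀ ω, (‖G ω‖₊ : ℝ≥0∞) ≤ ∑' j, (‖F j ω‖₊ : ℝ≥0∞) := by
      intro ω
      have hs : Summable fun j => ‖F j ω‖₊ :=
        summable_of_ne_finset_zero (s := Finset.range (M ω))
          (fun j hj => by
            rw [hzero j ω (by simpa using Finset.mem_range.not.mp hj)]; simp)
      calc (‖G ω‖₊ : ℝ≥0∞) ≤ ((∑' j, ‖F j ω‖₊ : ℝ≥0) : ℝ≥0∞) :=
            ENNReal.coe_le_coe.mpr (nnnorm_tsum_le hs)
        _ = ∑' j, (‖F j ω‖₊ : ℝ≥0∞) := ENNReal.coe_tsum hs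
    calc ∫⁻ ω, (‖G ω‖₊ : ℝ≥0∞) ∂P ≤ ∫⁻ ω, ∑' j, (‖F j ω‖₊ : ℝ≥0∞) ∂P :=
          lintegral_mono hkey
      _ = ∑' j, ∫⁻ ω, (‖F j ω‖₊ : ℝ≥0∞) ∂P :=
          lintegral_tsum fun j => (hFint j).aestronglyMeasurable.enorm
      _ = ∑' j, ENNReal.ofReal (∫ ω, ‖F j ω‖ ∂P) := by
          refine tsum_congr fun j => ?_
          rw [ofReal_integral_norm_eq_lintegral_enorm (hFint j)]; rfl
      _ = ENNReal.ofReal (∑' j, ∫ ω, ‖F j ω‖ ∂P) :=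
          (ENNReal.ofReal_tsum_of_nonneg
            (fun j => integral_nonneg fun ω => norm_nonneg _) hsumnorm).symm
      _ < ⊤ := ENNReal.ofReal_lt_top
  have hΔeq : Δhat = fun ω => τ * G ω := funext fun ω => by rw [hΔhat ω, hpt ω]
  constructor
  · rw [hΔeq]; exact hGint.const_mul τ
  · rw [hΔeq, integral_const_mul]
    congr 1
    rw [hGdef]
    rw [← integral_tsum_of_summable_integral_norm hFint hsumnorm]
    exact tsum_congr fun j => hFval j
end

section
/- Let d ≥ 1, let f : ℝ^d → ℝ be L-Lipschitz with respect to the Euclidean norm, and let δ > 0. Define the ball-smoothed function f_δ(x) := E_{v}[f(x + δ v)], where v is uniformly distributed on the closed Euclidean unit ball of ℝ^d (i.e., f_δ(x) is the average of f(x + δ·) over the unit ball with respect to normalized Lebesgue measure). Then f_δ is differentiable at every point of ℝ^d. -/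
open MeasureTheory

/-- **Differentiability of the ball-smoothed function.** Let `f : ℝ^d → ℝ` be `L`-Lipschitz
and `δ > 0`. Define `f_δ(x) := E_v[f(x + δ v)]`, where `v` is uniform on the closed Euclidean
unit ball (normalized Lebesgue measure on the ball). Then `f_δ` is differentiable everywhere. -/
theorem ball_smoothing_differentiable
    (d : ℕ) (hd : 1 ≤ d) (f : EuclideanSpace ℝ (Fin d) → ℝ) (L : ℝ)
    (hf : ∀ x y : EuclideanSpace ℝ (Fin d), |f x - f y| ≤ L * ‖x - y‖)
    (δ : ℝ) (hδ : 0 < δ)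
    (μball : Measure (EuclideanSpace ℝ (Fin d)))
    (hμball : μball =
      (volume (Metric.closedBall (0 : EuclideanSpace ℝ (Fin d)) 1))⁻¹ •
        volume.restrict (Metric.closedBall (0 : EuclideanSpace ℝ (Fin d)) 1))
    (fδ : EuclideanSpace ℝ (Fin d) → ℝ)
    (hfδ : ∀ x, fδ x = ∫ v, f (x + δ • v) ∂μball) :
    Differentiable ℝ fδ := by

  have hL0 : 0 ≤ L := by
    have h := hf (EuclideanSpace.single (⟨0, hd⟩ : Fin d) (1 : ℝ)) 0
    have hn : ‖EuclideanSpace.single (⟨0, hd⟩ : Fin d) (1 : ℝ) - 0‖ = 1 := by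
      simp [EuclideanSpace.norm_single]
    rw [hn, mul_one] at h
    exact le_trans (abs_nonneg _) h
  have hlip : LipschitzWith L.toNNReal f := by
    refine LipschitzWith.of_dist_le_mul fun x y => ?_
    rw [Real.coe_toNNReal L hL0]
    simpa [dist_eq_norm, Real.dist_eq] using hf x y
  have hvB0 : volume (Metric.closedBall (0 : EuclideanSpace ℝ (Fin d)) 1) ≠ 0 :=
    (Metric.measure_closedBall_pos volume 0 one_pos).ne'
  have hvBtop : volume (Metric.closedBall (0 : EuclideanSpace ℝ (Fin d)) 1) ≠ ⊤ :=
    (measure_closedBall_lt_top).ne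
  haveI : IsFiniteMeasure μball := by
    refine ⟨?_⟩
    rw [hμball]
    simp only [Measure.smul_apply, smul_eq_mul, Measure.restrict_apply_univ]
    rw [ENNReal.inv_mul_cancel hvB0 hvBtop]
    exact ENNReal.one_lt_top
  have hfd : fδ = fun x => ∫ v, f (x + δ • v) ∂μball := funext hfδ
  rw [hfd]
  intro x₀
  -- a.e. differentiability
  have hae : ∀ᵐ v ∂μball, DifferentiableAt ℝ f (x₀ + δ • v) := by
    have h1 : ∀ᵐ y ∂(volume : Measure (EuclideanSpace ℝ (Fin d))), DifferentiableAt ℝ f y :=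
      hlip.ae_differentiableAt
    rw [ae_iff] at h1 ⊢
    set N := {y : EuclideanSpace ℝ (Fin d) | ¬ DifferentiableAt ℝ f y} with hN
    have hpre : volume ((fun v : EuclideanSpace ℝ (Fin d) => x₀ + δ • v) ⁻¹' N) = 0 := by
      have heq : (fun v : EuclideanSpace ℝ (Fin d) => x₀ + δ • v) ⁻¹' N
          = (fun v : EuclideanSpace ℝ (Fin d) => δ • v) ⁻¹' ((fun y : EuclideanSpace ℝ (Fin d) => x₀ + y) ⁻¹' N) := rfl
      rw [heq]
      have h2 : volume ((fun y : EuclideanSpace ℝ (Fin d) => x₀ + y) ⁻¹' N) = 0 := by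
        rw [measure_preimage_add]; exact h1
      rw [Measure.addHaar_preimage_smul volume (ne_of_gt hδ)]
      simp [h2]
    rw [hμball]
    simp only [Measure.smul_apply, smul_eq_mul]
    have hres : volume.restrict (Metric.closedBall (0 : EuclideanSpace ℝ (Fin d)) 1)
        {a | ¬ DifferentiableAt ℝ f (x₀ + δ • a)} = 0 := by
      refine le_antisymm ?_ zero_le
      calc volume.restrict (Metric.closedBall (0 : EuclideanSpace ℝ (Fin d)) 1)
            {a | ¬ DifferentiableAt ℝ f (x₀ + δ • a)}
          ≤ volume {a | ¬ DifferentiableAt ℝ f (x₀ + δ • a)} :=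
            Measure.restrict_le_self _
        _ = 0 := hpre
    rw [hres, mul_zero]
  -- apply differentiation under the integral
  have cont : ∀ x : EuclideanSpace ℝ (Fin d), Continuous fun v : EuclideanSpace ℝ (Fin d) => f (x + δ • v) := fun x =>
    hlip.continuous.comp (continuous_const.add (continuous_id.const_smul δ))
  have hF_meas : ∀ᶠ x in nhds x₀,
      AEStronglyMeasurable (fun v : EuclideanSpace ℝ (Fin d) => f (x + δ • v)) μball :=
    Filter.Eventually.of_forall fun x => (cont x).aestronglyMeasurable
  have hF_int : Integrable (fun v : EuclideanSpace ℝ (Fin d) => f (x₀ + δ • v)) μball := by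
    rw [hμball]
    refine Integrable.smul_measure ?_ (ENNReal.inv_ne_top.mpr hvB0)
    exact ContinuousOn.integrableOn_compact (isCompact_closedBall 0 1)
      (cont x₀).continuousOn
  have hF'_meas : AEStronglyMeasurable
      (fun v : EuclideanSpace ℝ (Fin d) => fderiv ℝ f (x₀ + δ • v)) μball :=
    ((measurable_fderiv ℝ f).comp
      ((continuous_const.add (continuous_id.const_smul δ)).measurable)).aestronglyMeasurable
  have h_lip : ∀ᵐ v ∂μball, LipschitzOnWith (Real.nnabs L)
      (fun x : EuclideanSpace ℝ (Fin d) => f (x + δ • v)) (Metric.ball x₀ 1) := by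
    refine ae_of_all _ fun v => LipschitzWith.lipschitzOnWith ?_
    refine LipschitzWith.of_dist_le_mul fun x y => ?_
    have h := hf (x + δ • v) (y + δ • v)
    have : (x + δ • v) - (y + δ • v) = x - y := by abel
    rw [this] at h
    calc dist (f (x + δ • v)) (f (y + δ • v)) ≤ L * ‖x - y‖ := by
          simpa [Real.dist_eq] using h
      _ ≤ |L| * ‖x - y‖ := by
          exact mul_le_mul_of_nonneg_right (le_abs_self L) (norm_nonneg _)
      _ = (Real.nnabs L : ℝ) * dist x y := by rw [Real.coe_nnabs, dist_eq_norm]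
  have hbound : Integrable (fun _ : EuclideanSpace ℝ (Fin d) => L) μball := integrable_const L
  have h_diff : ∀ᵐ v ∂μball, HasFDerivAt (fun x : EuclideanSpace ℝ (Fin d) => f (x + δ • v))
      (fderiv ℝ f (x₀ + δ • v)) x₀ := by
    filter_upwards [hae] with v hv
    have hg : HasFDerivAt (fun x : EuclideanSpace ℝ (Fin d) => x + δ • v)
        (ContinuousLinearMap.id ℝ (EuclideanSpace ℝ (Fin d))) x₀ := (hasFDerivAt_id x₀).add_const _
    have hc := hv.hasFDerivAt.comp x₀ hg
    rw [ContinuousLinearMap.comp_id] at hc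
    exact hc
  exact ((hasFDerivAt_integral_of_dominated_loc_of_lip (Metric.ball_mem_nhds x₀ one_pos) hF_meas hF_int
    hF'_meas h_lip hbound h_diff).2).differentiableAt
end

section
/- Let d ≥ 1, let f : ℝ^d → ℝ be L-Lipschitz with respect to the Euclidean norm, and let δ > 0. Define the ball-smoothed function f_δ(x) := E_{v}[f(x + δ v)], where v is uniformly distributed on the closed Euclidean unit ball of ℝ^d. Then f_δ is differentiable and for every x ∈ ℝ^d its gradient satisfies ∇f_δ(x) = (d/(2δ)) · E_{u}[(f(x + δu) − f(x − δu)) u], where u is uniformly distributed on the Euclidean unit sphere S^{d−1} (equivalently, ∇f_δ(x) = (d/δ) · E_{u}[f(x + δu) u]). -/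
open MeasureTheory

open Metric Set
open scoped RealInnerProductSpace Pointwise ENNReal

noncomputable section
namespace BS

variable {d : ℕ}

/-- radial boundary of the ball `closedBall k 1` in direction `u`. -/
def Rr (k u : EuclideanSpace ℝ (Fin d)) : ℝ :=
  ⟪u, k⟫ + Real.sqrt (1 - ‖k‖ ^ 2 + ⟪u, k⟫ ^ 2)

lemma sqrt_one_bound {a : ℝ} (ha : 0 ≤ a) : |Real.sqrt a - 1| ≤ |a - 1| := by
  have h1 : (Real.sqrt a - 1) * (Real.sqrt a + 1) = a - 1 := by
    have := Real.sq_sqrt ha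
    ring_nf
    nlinarith [this]
  calc |Real.sqrt a - 1| = |Real.sqrt a - 1| * 1 := by ring
    _ ≤ |Real.sqrt a - 1| * |Real.sqrt a + 1| := by
        apply mul_le_mul_of_nonneg_left _ (abs_nonneg _)
        rw [abs_of_nonneg (by positivity)]
        linarith [Real.sqrt_nonneg a]
    _ = |a - 1| := by rw [← abs_mul, h1]

variable (k u : EuclideanSpace ℝ (Fin d))

lemma Rr_zero (u : EuclideanSpace ℝ (Fin d)) : Rr 0 u = 1 := by
  simp [Rr]

section bounds
variable (hk : ‖k‖ ≤ 1) (hu : ‖u‖ = 1)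
include hk hu

lemma inner_le : |⟪u, k⟫| ≤ ‖k‖ := by
  calc |⟪u, k⟫| ≤ ‖u‖ * ‖k‖ := abs_real_inner_le_norm u k
    _ = ‖k‖ := by rw [hu, one_mul]

lemma arg_nonneg : 0 ≤ 1 - ‖k‖ ^ 2 + ⟪u, k⟫ ^ 2 := by
  nlinarith [sq_nonneg (⟪u, k⟫), norm_nonneg k]

lemma Rr_approx : |Rr k u - 1 - ⟪u, k⟫| ≤ ‖k‖ ^ 2 := by
  have h0 := arg_nonneg k u hk hu
  have h1 : |Rr k u - 1 - ⟪u, k⟫| = |Real.sqrt (1 - ‖k‖ ^ 2 + ⟪u, k⟫ ^ 2) - 1| := by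
    rw [Rr]; ring_nf
  rw [h1]
  calc |Real.sqrt (1 - ‖k‖ ^ 2 + ⟪u, k⟫ ^ 2) - 1| ≤ |1 - ‖k‖ ^ 2 + ⟪u, k⟫ ^ 2 - 1| :=
      sqrt_one_bound h0
    _ ≤ ‖k‖ ^ 2 := by
      rw [abs_le]
      have := inner_le k u hk hu
      constructor <;> nlinarith [abs_nonneg (⟪u, k⟫), abs_le.mp this]

lemma Rr_sub_one : |Rr k u - 1| ≤ 2 * ‖k‖ := by
  have h1 := Rr_approx k u hk hu
  have h2 := inner_le k u hk hu
  have : ‖k‖ ^ 2 ≤ ‖k‖ := by nlinarith [norm_nonneg k]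
  calc |Rr k u - 1| ≤ |Rr k u - 1 - ⟪u, k⟫| + |⟪u, k⟫| := by
        have := abs_add_le (Rr k u - 1 - ⟪u, k⟫) (⟪u, k⟫); simpa using this
    _ ≤ 2 * ‖k‖ := by linarith

lemma Rr_nonneg : 0 ≤ Rr k u := by
  have h2 := inner_le k u hk hu
  have h3 : |⟪u, k⟫| ≤ Real.sqrt (1 - ‖k‖ ^ 2 + ⟪u, k⟫ ^ 2) := by
    rw [← Real.sqrt_sq_eq_abs]
    exact Real.sqrt_le_sqrt (by nlinarith [norm_nonneg k])
  rw [Rr]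
  have := neg_abs_le (⟪u, k⟫)
  linarith

end bounds

lemma mem_iff_le_Rr (hk : ‖k‖ < 1) (hu : ‖u‖ = 1) {r : ℝ} (hr : 0 < r) :
    ‖r • u - k‖ ≤ 1 ↔ r ≤ Rr k u := by
  have harg := arg_nonneg k u hk.le hu
  set t := ⟪u, k⟫ with ht
  have hsq : ‖r • u - k‖ ^ 2 = r ^ 2 - 2 * r * t + ‖k‖ ^ 2 := by
    rw [norm_sub_sq_real, real_inner_smul_left, norm_smul, hu, Real.norm_eq_abs, abs_of_pos hr]
    ring
  have hs : Real.sqrt (1 - ‖k‖ ^ 2 + t ^ 2) ^ 2 = 1 - ‖k‖ ^ 2 + t ^ 2 := Real.sq_sqrt harg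
  constructor
  · intro h
    have h2 : ‖r • u - k‖ ^ 2 ≤ 1 := by nlinarith [norm_nonneg (r • u - k)]
    rw [hsq] at h2
    -- (r - t)^2 ≤ 1 - ‖k‖^2 + t^2 = sqrt^2
    have h3 : (r - t) ^ 2 ≤ Real.sqrt (1 - ‖k‖ ^ 2 + t ^ 2) ^ 2 := by nlinarith
    have h4 : r - t ≤ Real.sqrt (1 - ‖k‖ ^ 2 + t ^ 2) := by
      nlinarith [Real.sqrt_nonneg (1 - ‖k‖ ^ 2 + t ^ 2)]
    rw [Rr]; linarith
  · intro h
    have h4 : r - t ≤ Real.sqrt (1 - ‖k‖ ^ 2 + t ^ 2) := by rw [Rr] at h; linarith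
    have h5 : -(Real.sqrt (1 - ‖k‖ ^ 2 + t ^ 2)) ≤ r - t := by
      have habs : |t| ≤ Real.sqrt (1 - ‖k‖ ^ 2 + t ^ 2) := by
        rw [← Real.sqrt_sq_eq_abs]
        exact Real.sqrt_le_sqrt (by nlinarith [norm_nonneg k])
      have := neg_abs_le t
      linarith [neg_le_of_abs_le habs, abs_le.mp habs]
    have h6 : (r - t) ^ 2 ≤ 1 - ‖k‖ ^ 2 + t ^ 2 := by
      rw [← hs]; exact sq_le_sq' h5 h4
    have h7 : ‖r • u - k‖ ^ 2 ≤ 1 := by rw [hsq]; nlinarith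
    nlinarith [norm_nonneg (r • u - k)]


lemma polar_repr [Nontrivial (EuclideanSpace ℝ (Fin d))] (F : EuclideanSpace ℝ (Fin d) → ℝ)
    (hF : Integrable F) :
    (∫ v, F v) = (∫ u : sphere (0 : EuclideanSpace ℝ (Fin d)) 1,
        ∫ r : Ioi (0:ℝ), F (r.1 • u.1) ∂(Measure.volumeIoiPow (d - 1))
        ∂(volume : Measure (EuclideanSpace ℝ (Fin d))).toSphere)
    ∧ Integrable (fun u : sphere (0 : EuclideanSpace ℝ (Fin d)) 1 =>
        ∫ r : Ioi (0:ℝ), F (r.1 • u.1) ∂(Measure.volumeIoiPow (d - 1)))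
        (volume : Measure (EuclideanSpace ℝ (Fin d))).toSphere := by
  let E := EuclideanSpace ℝ (Fin d)
  let μ : Measure E := volume
  have hdim : Module.finrank ℝ E = d := finrank_euclideanSpace_fin
  have hmp := μ.measurePreserving_homeomorphUnitSphereProd
  rw [hdim] at hmp
  have hcomp : (fun p : sphere (0:E) 1 × Ioi (0:ℝ) => F (p.2.1 • p.1.1)) ∘
      (homeomorphUnitSphereProd E) = fun z : ({0}ᶜ : Set E) => F z.1 := by
    funext z
    simp only [Function.comp_apply, homeomorphUnitSphereProd_apply_fst_coe,
      homeomorphUnitSphereProd_apply_snd_coe]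
    rw [smul_inv_smul₀ (norm_ne_zero_iff.2 z.2)]
  have hint_comap : Integrable (fun z : ({0}ᶜ : Set E) => F z.1) (μ.comap (↑)) := by
    rw [show (fun z : ({0}ᶜ : Set E) => F z.1) = F ∘ (↑) from rfl,
      ← (MeasurableEmbedding.subtype_coe (measurableSet_singleton (0:E)).compl).integrable_map_iff,
      map_comap_subtype_coe (measurableSet_singleton (0:E)).compl]
    exact hF.restrict
  have hint_prod : Integrable (fun p : sphere (0:E) 1 × Ioi (0:ℝ) => F (p.2.1 • p.1.1))
      (μ.toSphere.prod (Measure.volumeIoiPow (d - 1))) := by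
    rw [← hmp.integrable_comp_emb (Homeomorph.measurableEmbedding _), hcomp]
    exact hint_comap
  constructor
  · calc ∫ v, F v ∂μ = ∫ z : ({0}ᶜ : Set E), F z.1 ∂(μ.comap (↑)) := by
          rw [integral_subtype_comap (measurableSet_singleton (0:E)).compl,
            restrict_compl_singleton]
      _ = ∫ p : sphere (0:E) 1 × Ioi (0:ℝ), F (p.2.1 • p.1.1)
            ∂(μ.toSphere.prod (Measure.volumeIoiPow (d - 1))) := by
          rw [← hmp.integral_comp (Homeomorph.measurableEmbedding _)
            (fun p : sphere (0:E) 1 × Ioi (0:ℝ) => F (p.2.1 • p.1.1))]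
          refine integral_congr_ae (Filter.Eventually.of_forall fun z => ?_)
          exact (congrFun hcomp z).symm
      _ = _ := integral_prod _ hint_prod
  · exact hint_prod.integral_prod_left

lemma inner_repr (n : ℕ) (G : ℝ → ℝ) :
    ∫ r : Ioi (0:ℝ), G r.1 ∂(Measure.volumeIoiPow n) = ∫ r in Ioi (0:ℝ), r ^ n * G r := by
  rw [Measure.volumeIoiPow]
  simp only [ENNReal.ofReal]
  rw [integral_withDensity_eq_integral_smul
      ((measurable_subtype_coe.pow_const _).real_toNNReal) (fun r : Ioi (0:ℝ) => G r.1)]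
  rw [integral_subtype_comap measurableSet_Ioi (fun a : ℝ => Real.toNNReal (a ^ n) • G a)]
  refine setIntegral_congr_fun measurableSet_Ioi fun x hx => ?_
  rw [NNReal.smul_def, Real.coe_toNNReal _ (pow_nonneg (le_of_lt hx) _), smul_eq_mul]

lemma pow_sub_one_bound (n : ℕ) {r : ℝ} (hr : |r| ≤ 2) : |r ^ n - 1| ≤ 3 ^ n * |r - 1| := by
  induction n with
  | zero => simp
  | succ n ih =>
    have hid : r ^ (n+1) - 1 = r * (r ^ n - 1) + (r - 1) := by ring
    rw [hid]
    calc |r * (r ^ n - 1) + (r - 1)| ≤ |r| * |r ^ n - 1| + |r - 1| := by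
          refine (abs_add_le _ _).trans ?_; rw [abs_mul]
      _ ≤ 2 * (3 ^ n * |r - 1|) + |r - 1| := by
          have h1 : |r| * |r ^ n - 1| ≤ 2 * (3 ^ n * |r - 1|) :=
            mul_le_mul hr ih (abs_nonneg _) (by norm_num)
          linarith
      _ ≤ 3 ^ (n+1) * |r - 1| := by
          have h3 : (0:ℝ) ≤ 3 ^ n := by positivity
          have h4 := abs_nonneg (r - 1)
          have h5 : (1:ℝ) ≤ 3 ^ n := one_le_pow₀ (by norm_num)
          rw [pow_succ]; nlinarith

lemma indicator_inner (g : EuclideanSpace ℝ (Fin d) → ℝ) (k : EuclideanSpace ℝ (Fin d))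
    (hk : ‖k‖ < 1) (u : sphere (0 : EuclideanSpace ℝ (Fin d)) 1) :
    (∫ r in Ioi (0:ℝ), r ^ (d-1) * (indicator (closedBall k 1) g) (r • u.1))
      = ∫ r in (0:ℝ)..(Rr k u.1), r ^ (d-1) * g (r • u.1) := by
  have hu : ‖(u : EuclideanSpace ℝ (Fin d))‖ = 1 := by
    simpa [mem_sphere_iff_norm] using u.2
  have hR0 : 0 ≤ Rr k u.1 := Rr_nonneg k u.1 hk.le hu
  have hcong : EqOn (fun r : ℝ => r ^ (d-1) * (indicator (closedBall k 1) g) (r • u.1))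
      (indicator (Ioc 0 (Rr k u.1)) (fun r : ℝ => r ^ (d-1) * g (r • u.1))) (Ioi (0:ℝ)) := by
    intro r hr
    rw [mem_Ioi] at hr
    by_cases h : r • u.1 ∈ closedBall k 1
    · have hle : r ≤ Rr k u.1 := by
        rw [mem_closedBall, dist_eq_norm] at h
        exact (mem_iff_le_Rr k u.1 hk hu hr).mp h
      dsimp only
      rw [indicator_of_mem h, indicator_of_mem (mem_Ioc.mpr ⟨hr, hle⟩)]
    · have hgt : ¬ r ∈ Ioc 0 (Rr k u.1) := by
        intro hc
        exact h (mem_closedBall.mpr (by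
          rw [dist_eq_norm]; exact (mem_iff_le_Rr k u.1 hk hu hr).mpr hc.2))
      simp only [indicator_of_notMem h, indicator_of_notMem hgt, mul_zero]
  rw [setIntegral_congr_fun measurableSet_Ioi hcong,
    setIntegral_indicator measurableSet_Ioc,
    show Ioi (0:ℝ) ∩ Ioc 0 (Rr k u.1) = Ioc 0 (Rr k u.1) from
      inter_eq_right.mpr Ioc_subset_Ioi_self,
    intervalIntegral.integral_of_le hR0]
lemma integrable_sphere_cont {W : Type*} [NormedAddCommGroup W]
    (h : sphere (0 : EuclideanSpace ℝ (Fin d)) 1 → W)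
    (hh : Continuous h) : Integrable h (volume : Measure (EuclideanSpace ℝ (Fin d))).toSphere :=
  hh.integrable_of_hasCompactSupport (HasCompactSupport.of_compactSpace h)

lemma key_estimate [Nontrivial (EuclideanSpace ℝ (Fin d))]
    (g : EuclideanSpace ℝ (Fin d) → ℝ) (K : ℝ) (hK : 0 ≤ K)
    (hg : ∀ v w, |g v - g w| ≤ K * ‖v - w‖)
    (k : EuclideanSpace ℝ (Fin d)) (hk : ‖k‖ ≤ 1/2) :
    |(∫ v in closedBall k 1, g v) - (∫ v in closedBall (0 : EuclideanSpace ℝ (Fin d)) 1, g v)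
      - ∫ u : sphere (0 : EuclideanSpace ℝ (Fin d)) 1, g u.1 * ⟪u.1, k⟫
          ∂(volume : Measure (EuclideanSpace ℝ (Fin d))).toSphere|
    ≤ ((((volume : Measure (EuclideanSpace ℝ (Fin d))).toSphere univ).toReal *
        (4 * (3^(d-1) * (|g 0| + 2*K) + K) + (|g 0| + 2*K)))) * ‖k‖^2 := by
  have hlip : LipschitzWith (Real.toNNReal K) g :=
    LipschitzWith.of_dist_le_mul (fun v w => by
      rw [Real.dist_eq, dist_eq_norm]
      simpa [Real.coe_toNNReal K hK] using hg v w)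
  have hgc : Continuous g := hlip.continuous
  have hk1 : ‖k‖ < 1 := lt_of_le_of_lt hk (by norm_num)
  set M : ℝ := |g 0| + 2*K with hM
  have hM0 : 0 ≤ M := by rw [hM]; have := abs_nonneg (g 0); linarith
  have h35K : (0:ℝ) ≤ 3^(d-1) * M + K :=
    add_nonneg (mul_nonneg (by positivity) hM0) hK
  have hgb : ∀ v : EuclideanSpace ℝ (Fin d), ‖v‖ ≤ 2 → |g v| ≤ M := by
    intro v hv
    have h1 := hg v 0
    rw [sub_zero] at h1
    have : |g v| - |g 0| ≤ |g v - g 0| := by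
      have := abs_sub_abs_le_abs_sub (g v) (g 0); linarith
    nlinarith [norm_nonneg v]
  set F₁ : EuclideanSpace ℝ (Fin d) → ℝ := (closedBall k 1).indicator g with hF₁def
  set F₀ : EuclideanSpace ℝ (Fin d) → ℝ := (closedBall (0:EuclideanSpace ℝ (Fin d)) 1).indicator g
    with hF₀def
  have hF₁ : Integrable F₁ :=
    (hgc.continuousOn.integrableOn_compact (isCompact_closedBall _ _)).integrable_indicator
      measurableSet_closedBall
  have hF₀ : Integrable F₀ :=
    (hgc.continuousOn.integrableOn_compact (isCompact_closedBall _ _)).integrable_indicator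
      measurableSet_closedBall
  obtain ⟨eq₁, int₁⟩ := polar_repr F₁ hF₁
  obtain ⟨eq₀, int₀⟩ := polar_repr F₀ hF₀
  have hA₁ : (∫ v in closedBall k 1, g v) = ∫ u : sphere (0 : EuclideanSpace ℝ (Fin d)) 1,
      ∫ r : Ioi (0:ℝ), F₁ (r.1 • u.1) ∂(Measure.volumeIoiPow (d - 1))
      ∂(volume : Measure (EuclideanSpace ℝ (Fin d))).toSphere := by
    rw [← integral_indicator measurableSet_closedBall]
    exact eq₁
  have hA₀ : (∫ v in closedBall (0:EuclideanSpace ℝ (Fin d)) 1, g v)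
      = ∫ u : sphere (0 : EuclideanSpace ℝ (Fin d)) 1,
      ∫ r : Ioi (0:ℝ), F₀ (r.1 • u.1) ∂(Measure.volumeIoiPow (d - 1))
      ∂(volume : Measure (EuclideanSpace ℝ (Fin d))).toSphere := by
    rw [← integral_indicator measurableSet_closedBall]
    exact eq₀
  have hI₁ : ∀ u : sphere (0 : EuclideanSpace ℝ (Fin d)) 1,
      (∫ r : Ioi (0:ℝ), F₁ (r.1 • u.1) ∂(Measure.volumeIoiPow (d - 1)))
        = ∫ r in (0:ℝ)..(Rr k u.1), r ^ (d-1) * g (r • u.1) := by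
    intro u
    rw [inner_repr (d-1) (fun r => F₁ (r • u.1))]
    exact indicator_inner g k hk1 u
  have hI₀ : ∀ u : sphere (0 : EuclideanSpace ℝ (Fin d)) 1,
      (∫ r : Ioi (0:ℝ), F₀ (r.1 • u.1) ∂(Measure.volumeIoiPow (d - 1)))
        = ∫ r in (0:ℝ)..(1:ℝ), r ^ (d-1) * g (r • u.1) := by
    intro u
    rw [inner_repr (d-1) (fun r => F₀ (r • u.1))]
    have := indicator_inner g (0 : EuclideanSpace ℝ (Fin d)) (by simp) u
    rwa [Rr_zero] at this
  have hTint : Integrable (fun u : sphere (0 : EuclideanSpace ℝ (Fin d)) 1 => g u.1 * ⟪u.1, k⟫)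
      (volume : Measure (EuclideanSpace ℝ (Fin d))).toSphere :=
    integrable_sphere_cont _ ((hgc.comp continuous_subtype_val).mul
      (continuous_subtype_val.inner continuous_const))
  have hintD : Integrable (fun u : sphere (0 : EuclideanSpace ℝ (Fin d)) 1 =>
      (∫ r : Ioi (0:ℝ), F₁ (r.1 • u.1) ∂(Measure.volumeIoiPow (d - 1)))
      - (∫ r : Ioi (0:ℝ), F₀ (r.1 • u.1) ∂(Measure.volumeIoiPow (d - 1))))
      (volume : Measure (EuclideanSpace ℝ (Fin d))).toSphere := int₁.sub int₀
  have e2 : (∫ u : sphere (0 : EuclideanSpace ℝ (Fin d)) 1,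
        ((∫ r : Ioi (0:ℝ), F₁ (r.1 • u.1) ∂(Measure.volumeIoiPow (d - 1)))
          - (∫ r : Ioi (0:ℝ), F₀ (r.1 • u.1) ∂(Measure.volumeIoiPow (d - 1))))
        ∂(volume : Measure (EuclideanSpace ℝ (Fin d))).toSphere)
      = (∫ u : sphere (0 : EuclideanSpace ℝ (Fin d)) 1,
          (∫ r : Ioi (0:ℝ), F₁ (r.1 • u.1) ∂(Measure.volumeIoiPow (d - 1)))
          ∂(volume : Measure (EuclideanSpace ℝ (Fin d))).toSphere)
        - (∫ u : sphere (0 : EuclideanSpace ℝ (Fin d)) 1,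
          (∫ r : Ioi (0:ℝ), F₀ (r.1 • u.1) ∂(Measure.volumeIoiPow (d - 1)))
          ∂(volume : Measure (EuclideanSpace ℝ (Fin d))).toSphere) := integral_sub int₁ int₀
  have e3 : (∫ u : sphere (0 : EuclideanSpace ℝ (Fin d)) 1,
        ((∫ r : Ioi (0:ℝ), F₁ (r.1 • u.1) ∂(Measure.volumeIoiPow (d - 1)))
          - (∫ r : Ioi (0:ℝ), F₀ (r.1 • u.1) ∂(Measure.volumeIoiPow (d - 1)))
          - g u.1 * ⟪u.1, k⟫)
        ∂(volume : Measure (EuclideanSpace ℝ (Fin d))).toSphere)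
      = (∫ u : sphere (0 : EuclideanSpace ℝ (Fin d)) 1,
          ((∫ r : Ioi (0:ℝ), F₁ (r.1 • u.1) ∂(Measure.volumeIoiPow (d - 1)))
            - (∫ r : Ioi (0:ℝ), F₀ (r.1 • u.1) ∂(Measure.volumeIoiPow (d - 1))))
          ∂(volume : Measure (EuclideanSpace ℝ (Fin d))).toSphere)
        - (∫ u : sphere (0 : EuclideanSpace ℝ (Fin d)) 1, g u.1 * ⟪u.1, k⟫
          ∂(volume : Measure (EuclideanSpace ℝ (Fin d))).toSphere) := integral_sub hintD hTint
  have hsplit : (∫ v in closedBall k 1, g v)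
      - (∫ v in closedBall (0 : EuclideanSpace ℝ (Fin d)) 1, g v)
      - (∫ u : sphere (0 : EuclideanSpace ℝ (Fin d)) 1, g u.1 * ⟪u.1, k⟫
          ∂(volume : Measure (EuclideanSpace ℝ (Fin d))).toSphere)
      = ∫ u : sphere (0 : EuclideanSpace ℝ (Fin d)) 1,
          ((∫ r : Ioi (0:ℝ), F₁ (r.1 • u.1) ∂(Measure.volumeIoiPow (d - 1)))
           - (∫ r : Ioi (0:ℝ), F₀ (r.1 • u.1) ∂(Measure.volumeIoiPow (d - 1)))
           - g u.1 * ⟪u.1, k⟫)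
          ∂(volume : Measure (EuclideanSpace ℝ (Fin d))).toSphere := by
    rw [hA₁, hA₀, ← e2, ← e3]
  rw [hsplit]
  have hptw : ∀ u : sphere (0 : EuclideanSpace ℝ (Fin d)) 1,
      ‖(∫ r : Ioi (0:ℝ), F₁ (r.1 • u.1) ∂(Measure.volumeIoiPow (d - 1)))
       - (∫ r : Ioi (0:ℝ), F₀ (r.1 • u.1) ∂(Measure.volumeIoiPow (d - 1)))
       - g u.1 * ⟪u.1, k⟫‖
      ≤ (4 * (3^(d-1) * M + K) + M) * ‖k‖^2 := by
    intro u
    have hu : ‖(u : EuclideanSpace ℝ (Fin d))‖ = 1 := by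
      simpa [mem_sphere_iff_norm] using u.2
    rw [hI₁ u, hI₀ u]
    set R : ℝ := Rr k u.1 with hRdef
    set ψ : ℝ → ℝ := fun r => r ^ (d-1) * g (r • u.1) with hψ
    have hψc : Continuous ψ := by
      apply Continuous.mul (continuous_pow _)
      exact hgc.comp (continuous_id.smul continuous_const)
    have hRsub : |R - 1| ≤ 2 * ‖k‖ := Rr_sub_one k u.1 hk1.le hu
    have hRsub1 : |R - 1| ≤ 1 := le_trans hRsub (by linarith)
    have hdiff : (∫ r in (0:ℝ)..R, ψ r) - (∫ r in (0:ℝ)..(1:ℝ), ψ r)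
        = ∫ r in (1:ℝ)..R, ψ r :=
      intervalIntegral.integral_interval_sub_left
        (hψc.intervalIntegrable _ _) (hψc.intervalIntegrable _ _)
    rw [hdiff]
    have hmid : (∫ r in (1:ℝ)..R, ψ r)
        = (∫ r in (1:ℝ)..R, (ψ r - g u.1)) + (R - 1) * g u.1 := by
      rw [intervalIntegral.integral_sub (hψc.intervalIntegrable _ _)
        intervalIntegrable_const, intervalIntegral.integral_const, smul_eq_mul]
      ring
    rw [hmid]
    have hE1 : |∫ r in (1:ℝ)..R, (ψ r - g u.1)|
        ≤ ((3^(d-1) * M + K) * (2 * ‖k‖)) * |R - 1| := by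
      have hb : ∀ r ∈ uIoc (1:ℝ) R, ‖ψ r - g u.1‖ ≤ (3^(d-1) * M + K) * (2 * ‖k‖) := by
        intro r hr
        have hr1 : |r - 1| ≤ |R - 1| := by
          rcases Set.mem_uIoc.mp hr with ⟨h1, h2⟩ | ⟨h1, h2⟩
          · rw [abs_of_nonneg (by linarith), abs_of_nonneg (by linarith)]; linarith
          · rw [abs_of_nonpos (by linarith), abs_of_nonpos (by linarith)]
            have : R - 1 ≤ r - 1 := by linarith
            linarith
        have hrabs : |r| ≤ 2 := by
          have := abs_sub_abs_le_abs_sub r 1; rw [abs_one] at this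
          linarith [le_trans hr1 hRsub1]
        have hnru : ‖r • u.1‖ ≤ 2 := by
          rw [norm_smul, hu, mul_one, Real.norm_eq_abs]; exact hrabs
        have h1 : |ψ r - g u.1| ≤ |r^(d-1) - 1| * |g (r • u.1)| + |g (r • u.1) - g u.1| := by
          have hid : ψ r - g u.1 = (r^(d-1) - 1) * g (r • u.1) + (g (r • u.1) - g u.1) := by
            rw [hψ]; ring
          rw [hid]
          refine (abs_add_le _ _).trans ?_
          rw [abs_mul]
        have h2 : |g (r • u.1) - g u.1| ≤ K * |r - 1| := by
          have hgg := hg (r • u.1) u.1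
          have hn : ‖r • u.1 - u.1‖ = |r - 1| := by
            rw [show r • u.1 - u.1 = (r - 1) • u.1 by rw [sub_smul, one_smul],
              norm_smul, hu, mul_one, Real.norm_eq_abs]
          rw [hn] at hgg; exact hgg
        have h3 : |r^(d-1) - 1| ≤ 3^(d-1) * |r - 1| := pow_sub_one_bound _ hrabs
        have h4 : |g (r • u.1)| ≤ M := hgb _ hnru
        have h5 : |r^(d-1) - 1| * |g (r • u.1)| ≤ (3^(d-1) * M) * |r - 1| := by
          calc |r^(d-1) - 1| * |g (r • u.1)| ≤ (3^(d-1) * |r - 1|) * M :=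
                mul_le_mul h3 h4 (abs_nonneg _) (by positivity)
            _ = (3^(d-1) * M) * |r - 1| := by ring
        have h6 : |r - 1| ≤ 2 * ‖k‖ := le_trans hr1 hRsub
        have h7 : (3^(d-1) * M + K) * |r - 1| ≤ (3^(d-1) * M + K) * (2 * ‖k‖) :=
          mul_le_mul_of_nonneg_left h6 h35K
        rw [Real.norm_eq_abs]
        have h8 : (3^(d-1) * M) * |r - 1| + K * |r - 1| = (3^(d-1) * M + K) * |r - 1| := by ring
        linarith
      have hnb := intervalIntegral.norm_integral_le_of_norm_le_const hb
      rw [Real.norm_eq_abs] at hnb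
      calc |∫ r in (1:ℝ)..R, (ψ r - g u.1)| ≤ (3^(d-1) * M + K) * (2 * ‖k‖) * |R - 1| := by
            simpa [abs_sub_comm] using hnb
        _ = ((3^(d-1) * M + K) * (2 * ‖k‖)) * |R - 1| := by ring
    have hE2 : |(R - 1) * g u.1 - g u.1 * ⟪u.1, k⟫| ≤ ‖k‖^2 * M := by
      have happ : |R - 1 - ⟪u.1, k⟫| ≤ ‖k‖^2 := Rr_approx k u.1 hk1.le hu
      have hgu : |g u.1| ≤ M := hgb _ (by rw [hu]; norm_num)
      have hid : (R - 1) * g u.1 - g u.1 * ⟪u.1, k⟫ = (R - 1 - ⟪u.1, k⟫) * g u.1 := by ring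
      rw [hid, abs_mul]
      apply mul_le_mul happ hgu (abs_nonneg _) (by positivity)
    rw [Real.norm_eq_abs]
    have habs : |(∫ r in (1:ℝ)..R, (ψ r - g u.1)) + (R - 1) * g u.1 - g u.1 * ⟪u.1, k⟫|
        ≤ |∫ r in (1:ℝ)..R, (ψ r - g u.1)| + |(R - 1) * g u.1 - g u.1 * ⟪u.1, k⟫| := by
      rw [add_sub_assoc]
      exact abs_add_le _ _
    have hq : ((3^(d-1) * M + K) * (2 * ‖k‖)) * |R - 1|
        ≤ ((3^(d-1) * M + K) * (2 * ‖k‖)) * (2 * ‖k‖) :=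
      mul_le_mul_of_nonneg_left hRsub (mul_nonneg h35K (by positivity))
    have hring : ((3^(d-1) * M + K) * (2 * ‖k‖)) * (2 * ‖k‖)
        = 4 * (3^(d-1) * M + K) * ‖k‖^2 := by ring
    have hring2 : (4 * (3^(d-1) * M + K) + M) * ‖k‖^2
        = 4 * (3^(d-1) * M + K) * ‖k‖^2 + ‖k‖^2 * M := by ring
    linarith [le_trans habs (add_le_add hE1 hE2)]
  have hfin := norm_integral_le_of_norm_le_const
    (μ := (volume : Measure (EuclideanSpace ℝ (Fin d))).toSphere)
    (Filter.Eventually.of_forall hptw)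
  rw [Real.norm_eq_abs] at hfin
  calc _ ≤ (4 * (3^(d-1) * M + K) + M) * ‖k‖^2 *
        (((volume : Measure (EuclideanSpace ℝ (Fin d))).toSphere) univ).toReal := hfin
    _ = _ := by rw [hM]; ring
def negS (u : sphere (0 : EuclideanSpace ℝ (Fin d)) 1) : sphere (0 : EuclideanSpace ℝ (Fin d)) 1 :=
  ⟨-u.1, by simpa [mem_sphere_iff_norm] using u.2⟩

lemma continuous_negS : Continuous (negS (d := d)) :=
  Continuous.subtype_mk continuous_subtype_val.neg _

lemma measurePreserving_negS [Nontrivial (EuclideanSpace ℝ (Fin d))] :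
    MeasurePreserving (negS (d := d))
      (volume : Measure (EuclideanSpace ℝ (Fin d))).toSphere
      (volume : Measure (EuclideanSpace ℝ (Fin d))).toSphere := by
  refine ⟨continuous_negS.measurable, ?_⟩
  ext s hs
  rw [Measure.map_apply continuous_negS.measurable hs]
  rw [Measure.toSphere_apply' _ hs, Measure.toSphere_apply' _ (continuous_negS.measurable hs)]
  congr 1
  have himg : (Subtype.val '' (negS ⁻¹' s)) = -(Subtype.val '' s) := by
    ext v
    constructor
    · rintro ⟨u, hu, rfl⟩
      exact ⟨negS u, hu, by simp [negS]⟩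
    · rintro ⟨w, hw, hwv⟩
      have hmem : -w.1 ∈ sphere (0 : EuclideanSpace ℝ (Fin d)) 1 := by
        simpa [mem_sphere_iff_norm] using w.2
      refine ⟨⟨-w.1, hmem⟩, ?_, ?_⟩
      · show negS ⟨-w.1, hmem⟩ ∈ s
        have heq : negS ⟨-w.1, hmem⟩ = w := by
          apply Subtype.ext; simp [negS]
        rw [heq]; exact hw
      · show -w.1 = v
        rw [hwv, neg_neg]
  rw [himg]
  have hsmul : Ioo (0:ℝ) 1 • (-(Subtype.val '' s)) = -(Ioo (0:ℝ) 1 • (Subtype.val '' s)) := by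
    ext z
    simp only [Set.mem_smul, Set.mem_neg]
    constructor
    · rintro ⟨r, hr, y, hy, rfl⟩
      exact ⟨r, hr, -y, hy, by rw [smul_neg]⟩
    · rintro ⟨r, hr, y, hy, hid⟩
      refine ⟨r, hr, -y, by simpa using hy, ?_⟩
      rw [smul_neg, hid, neg_neg]
  rw [hsmul, Measure.measure_neg]
lemma hasGradient_smooth [Nontrivial (EuclideanSpace ℝ (Fin d))]
    (f : EuclideanSpace ℝ (Fin d) → ℝ) (K : ℝ) (hK : 0 ≤ K)
    (hf : ∀ x y, |f x - f y| ≤ K * ‖x - y‖) (δ : ℝ) (hδ : 0 < δ)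
    (x : EuclideanSpace ℝ (Fin d)) :
    HasGradientAt (fun y => ((volume (closedBall (0:EuclideanSpace ℝ (Fin d)) 1)).toReal)⁻¹ *
        ∫ v in closedBall (0:EuclideanSpace ℝ (Fin d)) 1, f (y + δ • v))
      ((((volume (closedBall (0:EuclideanSpace ℝ (Fin d)) 1)).toReal * δ)⁻¹) •
        ∫ u : sphere (0:EuclideanSpace ℝ (Fin d)) 1, f (x + δ • u.1) • u.1
          ∂(volume : Measure (EuclideanSpace ℝ (Fin d))).toSphere) x := by
  set c : ℝ := (volume (closedBall (0:EuclideanSpace ℝ (Fin d)) 1)).toReal with hc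
  have hc0 : 0 < c := by
    rw [hc]
    refine ENNReal.toReal_pos ?_ (IsCompact.measure_lt_top (isCompact_closedBall _ _)).ne
    refine ne_of_gt (lt_of_lt_of_le
      (measure_ball_pos (volume : Measure (EuclideanSpace ℝ (Fin d)))
        (0:EuclideanSpace ℝ (Fin d)) one_pos) ?_)
    exact measure_mono ball_subset_closedBall
  set g : EuclideanSpace ℝ (Fin d) → ℝ := fun v => f (x + δ • v) with hgdef
  have hg : ∀ v w, |g v - g w| ≤ (K * δ) * ‖v - w‖ := by
    intro v w
    have h1 := hf (x + δ • v) (x + δ • w)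
    have h2 : ‖x + δ • v - (x + δ • w)‖ = δ * ‖v - w‖ := by
      rw [add_sub_add_left_eq_sub, ← smul_sub, norm_smul, Real.norm_eq_abs, abs_of_pos hδ]
    rw [h2] at h1
    calc |g v - g w| ≤ K * (δ * ‖v - w‖) := h1
      _ = (K * δ) * ‖v - w‖ := by ring
  have hKδ : 0 ≤ K * δ := mul_nonneg hK hδ.le
  have hlip : LipschitzWith (Real.toNNReal (K * δ)) g :=
    LipschitzWith.of_dist_le_mul (fun v w => by
      rw [Real.dist_eq, dist_eq_norm]
      simpa [Real.coe_toNNReal _ hKδ] using hg v w)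
  have hgc : Continuous g := hlip.continuous
  -- translation identity
  have htrans : ∀ k : EuclideanSpace ℝ (Fin d),
      (∫ v in closedBall k 1, g v) = ∫ v in closedBall (0:EuclideanSpace ℝ (Fin d)) 1, g (v + k) := by
    intro k
    rw [← integral_indicator measurableSet_closedBall, ← integral_indicator measurableSet_closedBall]
    rw [← integral_add_right_eq_self (fun v => (closedBall k 1).indicator g v) k]
    congr 1
    funext v
    by_cases hv : v ∈ closedBall (0:EuclideanSpace ℝ (Fin d)) 1
    · have hv' : v + k ∈ closedBall k 1 := by
        rw [mem_closedBall] at hv ⊢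
        simpa [dist_eq_norm] using hv
      rw [indicator_of_mem hv', indicator_of_mem hv]
    · have hv' : ¬ (v + k ∈ closedBall k 1) := by
        rw [mem_closedBall] at hv ⊢
        simpa [dist_eq_norm] using hv
      rw [indicator_of_notMem hv', indicator_of_notMem hv]
  -- function rewriting
  have hfδfun : ∀ y : EuclideanSpace ℝ (Fin d),
      (∫ v in closedBall (0:EuclideanSpace ℝ (Fin d)) 1, f (y + δ • v))
        = ∫ v in closedBall (δ⁻¹ • (y - x)) 1, g v := by
    intro y
    rw [htrans (δ⁻¹ • (y - x))]
    congr 1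
    funext v
    rw [hgdef]
    congr 1
    rw [smul_add, smul_smul, mul_inv_cancel₀ hδ.ne', one_smul]
    abel
  have hIv : Integrable (fun u : sphere (0:EuclideanSpace ℝ (Fin d)) 1 => g u.1 • u.1)
      (volume : Measure (EuclideanSpace ℝ (Fin d))).toSphere :=
    integrable_sphere_cont _ ((hgc.comp continuous_subtype_val).smul continuous_subtype_val)
  set Iv : EuclideanSpace ℝ (Fin d) :=
    ∫ u : sphere (0:EuclideanSpace ℝ (Fin d)) 1, g u.1 • u.1
      ∂(volume : Measure (EuclideanSpace ℝ (Fin d))).toSphere with hIvdef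
  have hinner : ∀ h : EuclideanSpace ℝ (Fin d), ⟪Iv, h⟫
      = ∫ u : sphere (0:EuclideanSpace ℝ (Fin d)) 1, g u.1 * ⟪u.1, h⟫
        ∂(volume : Measure (EuclideanSpace ℝ (Fin d))).toSphere := by
    intro h
    rw [real_inner_comm, hIvdef, ← integral_inner hIv h]
    congr 1
    funext u
    rw [real_inner_smul_right, real_inner_comm]
  -- the constant from key_estimate
  set Cst : ℝ := (((volume : Measure (EuclideanSpace ℝ (Fin d))).toSphere univ).toReal *
      (4 * (3^(d-1) * (|g 0| + 2*(K*δ)) + (K*δ)) + (|g 0| + 2*(K*δ)))) with hCst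
  have hkey : ∀ h : EuclideanSpace ℝ (Fin d), ‖h‖ ≤ δ/2 →
      |(c⁻¹ * ∫ v in closedBall (0:EuclideanSpace ℝ (Fin d)) 1, f ((x + h) + δ • v))
        - (c⁻¹ * ∫ v in closedBall (0:EuclideanSpace ℝ (Fin d)) 1, f (x + δ • v))
        - (c * δ)⁻¹ * ⟪Iv, h⟫|
      ≤ (c⁻¹ * Cst * (δ⁻¹)^2) * (‖h‖ * ‖h‖) := by
    intro h hh
    set k : EuclideanSpace ℝ (Fin d) := δ⁻¹ • h with hkdef
    have hknorm : ‖k‖ = δ⁻¹ * ‖h‖ := by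
      rw [hkdef, norm_smul, Real.norm_eq_abs, abs_of_pos (inv_pos.mpr hδ)]
    have hk2 : ‖k‖ ≤ 1/2 := by
      rw [hknorm]
      rw [show (1:ℝ)/2 = δ⁻¹ * (δ/2) by field_simp]
      exact mul_le_mul_of_nonneg_left hh (inv_pos.mpr hδ).le
    have hest := key_estimate g (K*δ) hKδ hg k hk2
    have hT : (∫ u : sphere (0:EuclideanSpace ℝ (Fin d)) 1, g u.1 * ⟪u.1, k⟫
          ∂(volume : Measure (EuclideanSpace ℝ (Fin d))).toSphere)
        = δ⁻¹ * ⟪Iv, h⟫ := by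
      rw [hinner h, ← integral_const_mul]
      congr 1
      funext u
      rw [hkdef, real_inner_smul_right]
      ring
    rw [hT] at hest
    have hx0 : δ⁻¹ • ((x:EuclideanSpace ℝ (Fin d)) - x) = (0:EuclideanSpace ℝ (Fin d)) := by
      rw [sub_self, smul_zero]
    have hxh : δ⁻¹ • ((x + h) - x) = k := by
      rw [hkdef]
      congr 1
      abel
    have hrw1 : (∫ v in closedBall (0:EuclideanSpace ℝ (Fin d)) 1, f ((x + h) + δ • v))
        = ∫ v in closedBall k 1, g v := by rw [hfδfun (x + h), hxh]
    have hrw0 : (∫ v in closedBall (0:EuclideanSpace ℝ (Fin d)) 1, f (x + δ • v))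
        = ∫ v in closedBall (0:EuclideanSpace ℝ (Fin d)) 1, g v := by
      rw [hfδfun x, hx0]
    rw [hrw1, hrw0]
    have hfact : (c⁻¹ * ∫ v in closedBall k 1, g v)
        - (c⁻¹ * ∫ v in closedBall (0:EuclideanSpace ℝ (Fin d)) 1, g v)
        - (c * δ)⁻¹ * ⟪Iv, h⟫
        = c⁻¹ * ((∫ v in closedBall k 1, g v)
          - (∫ v in closedBall (0:EuclideanSpace ℝ (Fin d)) 1, g v)
          - δ⁻¹ * ⟪Iv, h⟫) := by
      rw [mul_inv]
      ring
    rw [hfact, abs_mul, abs_of_pos (inv_pos.mpr hc0)]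
    calc c⁻¹ * |(∫ v in closedBall k 1, g v)
          - (∫ v in closedBall (0:EuclideanSpace ℝ (Fin d)) 1, g v)
          - δ⁻¹ * ⟪Iv, h⟫|
        ≤ c⁻¹ * (Cst * ‖k‖^2) := by
          apply mul_le_mul_of_nonneg_left _ (inv_pos.mpr hc0).le
          rw [hCst]
          exact hest
      _ = (c⁻¹ * Cst * (δ⁻¹)^2) * (‖h‖ * ‖h‖) := by
          rw [hknorm]
          ring
  -- conclude
  rw [hasGradientAt_iff_hasFDerivAt, hasFDerivAt_iff_isLittleO_nhds_zero]
  have hbig : (fun h : EuclideanSpace ℝ (Fin d) =>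
      (c⁻¹ * ∫ v in closedBall (0:EuclideanSpace ℝ (Fin d)) 1, f ((x + h) + δ • v))
        - (c⁻¹ * ∫ v in closedBall (0:EuclideanSpace ℝ (Fin d)) 1, f (x + δ • v))
        - (InnerProductSpace.toDual ℝ (EuclideanSpace ℝ (Fin d)) ((c * δ)⁻¹ • Iv)) h)
      =O[nhds 0] (fun h => ‖h‖ * ‖h‖) := by
    apply Asymptotics.IsBigO.of_bound (c⁻¹ * Cst * (δ⁻¹)^2)
    have hev : ∀ᶠ h : EuclideanSpace ℝ (Fin d) in nhds 0, ‖h‖ ≤ δ/2 := by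
      filter_upwards [Metric.ball_mem_nhds (0:EuclideanSpace ℝ (Fin d)) (half_pos hδ)] with h hh
      rw [mem_ball, dist_zero_right] at hh
      exact hh.le
    filter_upwards [hev] with h hh
    have := hkey h hh
    rw [InnerProductSpace.toDual_apply_apply, real_inner_smul_left]
    calc ‖(c⁻¹ * ∫ v in closedBall (0:EuclideanSpace ℝ (Fin d)) 1, f ((x + h) + δ • v))
          - (c⁻¹ * ∫ v in closedBall (0:EuclideanSpace ℝ (Fin d)) 1, f (x + δ • v))
          - (c * δ)⁻¹ * ⟪Iv, h⟫‖
        ≤ (c⁻¹ * Cst * (δ⁻¹)^2) * (‖h‖ * ‖h‖) := by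
          rw [Real.norm_eq_abs]; exact this
      _ ≤ (c⁻¹ * Cst * (δ⁻¹)^2) * ‖‖h‖ * ‖h‖‖ := by
          rw [Real.norm_eq_abs, abs_of_nonneg (by positivity)]
    
  have hlitt : (fun h : EuclideanSpace ℝ (Fin d) => ‖h‖ * ‖h‖)
      =o[nhds 0] (fun h : EuclideanSpace ℝ (Fin d) => h) := by
    rw [Asymptotics.isLittleO_iff]
    intro ε hε
    filter_upwards [Metric.ball_mem_nhds (0:EuclideanSpace ℝ (Fin d)) hε] with h hh
    rw [mem_ball, dist_zero_right] at hh
    rw [Real.norm_eq_abs, abs_of_nonneg (by positivity)]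
    have := norm_nonneg h
    nlinarith
  exact hbig.trans_isLittleO hlitt

end BS
open MeasureTheory BS Metric Set
open scoped RealInnerProductSpace

/-- **Two-point sphere formula for the gradient of the ball-smoothed function.** Let
`f : ℝ^d → ℝ` be `L`-Lipschitz and `δ > 0`, and let `f_δ(x) := E_v[f(x + δ v)]` with `v`
uniform on the closed unit ball. Then `f_δ` is differentiable and, for every `x`,
`∇f_δ(x) = (d/(2δ)) E_u[(f(x + δu) - f(x - δu)) u]`, where `u` is uniform on the unit
sphere (the normalized surface/rotation-invariant probability measure). -/
theorem ball_smoothing_gradient_two_point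
    (d : ℕ) (hd : 1 ≤ d) (f : EuclideanSpace ℝ (Fin d) → ℝ) (L : ℝ)
    (hf : ∀ x y : EuclideanSpace ℝ (Fin d), |f x - f y| ≤ L * ‖x - y‖)
    (δ : ℝ) (hδ : 0 < δ)
    (μball : Measure (EuclideanSpace ℝ (Fin d)))
    (hμball : μball =
      (volume (Metric.closedBall (0 : EuclideanSpace ℝ (Fin d)) 1))⁻¹ •
        volume.restrict (Metric.closedBall (0 : EuclideanSpace ℝ (Fin d)) 1))
    (μsphere : Measure (Metric.sphere (0 : EuclideanSpace ℝ (Fin d)) 1))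
    (hμsphere : μsphere =
      ((volume : Measure (EuclideanSpace ℝ (Fin d))).toSphere Set.univ)⁻¹ •
        (volume : Measure (EuclideanSpace ℝ (Fin d))).toSphere)
    (fδ : EuclideanSpace ℝ (Fin d) → ℝ)
    (hfδ : ∀ x, fδ x = ∫ v, f (x + δ • v) ∂μball) :
    Differentiable ℝ fδ ∧
      ∀ x : EuclideanSpace ℝ (Fin d),
        gradient fδ x =
          ((d : ℝ) / (2 * δ)) •
            ∫ u : Metric.sphere (0 : EuclideanSpace ℝ (Fin d)) 1,
              (f (x + δ • (u : EuclideanSpace ℝ (Fin d))) -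
                  f (x - δ • (u : EuclideanSpace ℝ (Fin d)))) •
                (u : EuclideanSpace ℝ (Fin d)) ∂μsphere := by
  haveI : Nontrivial (EuclideanSpace ℝ (Fin d)) := by
    have : 0 < Module.finrank ℝ (EuclideanSpace ℝ (Fin d)) := by
      rw [finrank_euclideanSpace_fin]; omega
    exact Module.nontrivial_of_finrank_pos this
  have hL0 : 0 ≤ L := by
    obtain ⟨y, hy⟩ := exists_ne (0 : EuclideanSpace ℝ (Fin d))
    have hnorm : 0 < ‖y‖ := norm_pos_iff.mpr hy
    have h := hf y 0
    rw [sub_zero] at h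
    nlinarith [abs_nonneg (f y - f 0)]
  have hfc : Continuous f := by
    have hlip : LipschitzWith (Real.toNNReal L) f :=
      LipschitzWith.of_dist_le_mul (fun v w => by
        rw [Real.dist_eq, dist_eq_norm]
        simpa [Real.coe_toNNReal _ hL0] using hf v w)
    exact hlip.continuous
  set c : ℝ := (volume (Metric.closedBall (0 : EuclideanSpace ℝ (Fin d)) 1)).toReal with hcdef
  have hc0 : 0 < c := by
    rw [hcdef]
    refine ENNReal.toReal_pos ?_ (IsCompact.measure_lt_top (isCompact_closedBall _ _)).ne
    refine ne_of_gt (lt_of_lt_of_le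
      (measure_ball_pos (volume : Measure (EuclideanSpace ℝ (Fin d)))
        (0 : EuclideanSpace ℝ (Fin d)) one_pos) ?_)
    exact measure_mono ball_subset_closedBall
  have hfδ_eq : fδ = fun y => c⁻¹ *
      ∫ v in Metric.closedBall (0 : EuclideanSpace ℝ (Fin d)) 1, f (y + δ • v) := by
    funext y
    rw [hfδ y, hμball, integral_smul_measure, ENNReal.toReal_inv, smul_eq_mul, hcdef]
  have hgrad : ∀ x : EuclideanSpace ℝ (Fin d), HasGradientAt fδ
      ((c * δ)⁻¹ • ∫ u : sphere (0 : EuclideanSpace ℝ (Fin d)) 1, f (x + δ • u.1) • u.1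
        ∂(volume : Measure (EuclideanSpace ℝ (Fin d))).toSphere) x := by
    intro x
    rw [hfδ_eq]
    exact hasGradient_smooth f L hL0 hf δ hδ x
  constructor
  · exact fun x => (hgrad x).differentiableAt
  · intro x
    rw [(hgrad x).gradient]
    -- now show the two integrals agree
    have hintp : Integrable (fun u : sphere (0 : EuclideanSpace ℝ (Fin d)) 1 =>
        f (x + δ • u.1) • u.1) (volume : Measure (EuclideanSpace ℝ (Fin d))).toSphere :=
      integrable_sphere_cont _ (by fun_prop)
    have hintm : Integrable (fun u : sphere (0 : EuclideanSpace ℝ (Fin d)) 1 =>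
        f (x - δ • u.1) • u.1) (volume : Measure (EuclideanSpace ℝ (Fin d))).toSphere :=
      integrable_sphere_cont _ (by fun_prop)
    set Ip : EuclideanSpace ℝ (Fin d) :=
      ∫ u : sphere (0 : EuclideanSpace ℝ (Fin d)) 1, f (x + δ • u.1) • u.1
        ∂(volume : Measure (EuclideanSpace ℝ (Fin d))).toSphere with hIp
    set Im : EuclideanSpace ℝ (Fin d) :=
      ∫ u : sphere (0 : EuclideanSpace ℝ (Fin d)) 1, f (x - δ • u.1) • u.1
        ∂(volume : Measure (EuclideanSpace ℝ (Fin d))).toSphere with hIm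
    have hanti : Im = -Ip := by
      have hmeas : AEStronglyMeasurable
          (fun u : sphere (0 : EuclideanSpace ℝ (Fin d)) 1 => f (x - δ • u.1) • u.1)
          (Measure.map (negS (d := d))
            (volume : Measure (EuclideanSpace ℝ (Fin d))).toSphere) :=
        (by fun_prop : Continuous (fun u : sphere (0 : EuclideanSpace ℝ (Fin d)) 1 =>
          f (x - δ • u.1) • u.1)).aestronglyMeasurable
      have h1 : Im = ∫ u : sphere (0 : EuclideanSpace ℝ (Fin d)) 1,
          f (x - δ • (negS u).1) • (negS u).1
          ∂(volume : Measure (EuclideanSpace ℝ (Fin d))).toSphere := by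
        conv_lhs => rw [hIm, ← (measurePreserving_negS (d := d)).map_eq]
        exact integral_map continuous_negS.measurable.aemeasurable hmeas
      rw [h1]
      have h2 : ∀ u : sphere (0 : EuclideanSpace ℝ (Fin d)) 1,
          f (x - δ • (negS u).1) • (negS u).1 = -(f (x + δ • u.1) • u.1) := by
        intro u
        have : (negS u).1 = -u.1 := rfl
        rw [this, smul_neg, smul_neg, sub_neg_eq_add]
      simp_rw [h2]
      rw [integral_neg]
    have hsub : (∫ u : sphere (0 : EuclideanSpace ℝ (Fin d)) 1,
        (f (x + δ • u.1) - f (x - δ • u.1)) • u.1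
          ∂(volume : Measure (EuclideanSpace ℝ (Fin d))).toSphere) = Ip - Im := by
      simp_rw [sub_smul]
      exact integral_sub hintp hintm
    have huniv : ((volume : Measure (EuclideanSpace ℝ (Fin d))).toSphere univ).toReal
        = d * c := by
      have h3 := Measure.toSphere_apply_univ (volume : Measure (EuclideanSpace ℝ (Fin d)))
      rw [finrank_euclideanSpace_fin] at h3
      rw [h3, ENNReal.toReal_mul, ENNReal.toReal_natCast]
      congr 1
      rw [hcdef]
      congr 1
      exact (Measure.addHaar_closedBall_eq_addHaar_ball
        (volume : Measure (EuclideanSpace ℝ (Fin d))) 0 1).symm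
    rw [hμsphere, integral_smul_measure, ENNReal.toReal_inv, hsub, hanti, sub_neg_eq_add,
      huniv]
    rw [show Ip + Ip = (2:ℝ) • Ip from (two_smul ℝ Ip).symm]
    rw [smul_smul, smul_smul]
    congr 1
    have hdne : (d:ℝ) ≠ 0 := Nat.cast_ne_zero.mpr (by omega)
    field_simp
end
end
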